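/- arXiv:1802.00466 — 4 statements merged into one kernel-verified Lean document; each statement's English description precedes it below -/
import Mathlib

section
/- Let g(w) = w + 1 + α/w + O(1/w²) be holomorphic for |w| > R, and let L_{−α}(w) = w − α·log w (principal branch) on the sector S_R = {|w| > R, |Arg w| < 3π/4}. Then the conjugated map ρ = L_{−α} ∘ g ∘ L_{−α}⁻¹, defined on L_{−α}(S_R), has the form ρ(w) = w + 1 + O(1/w^{1+ε}) for some ε > 0. -/
open Complex

/-- The sector `S_R = {w : |w| > R, |Arg w| < 3π/4}`. -/
def fatouSector (R : ℝ) : Set ℂ :=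
  {w : ℂ | R < ‖w‖ ∧ |Complex.arg w| < 3 * Real.pi / 4}

lemma my_log_sub_log {w v : ℂ} (hw : w ≠ 0) (hv : v ≠ 0)
    (hargw : |Complex.arg w| < 3 * Real.pi / 4)
    (hargv : |Complex.arg v| < 3 * Real.pi / 4)
    (hre : 0 ≤ (v / w).re) :
    Complex.log v - Complex.log w = Complex.log (v / w) := by
  have hvw : v / w ≠ 0 := div_ne_zero hv hw
  have h1 : Complex.exp (Complex.log v - Complex.log w) = Complex.exp (Complex.log (v / w)) := by
    rw [Complex.exp_sub, Complex.exp_log hv, Complex.exp_log hw, Complex.exp_log hvw]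
  obtain ⟨n, hn⟩ := Complex.exp_eq_exp_iff_exists_int.mp h1
  have him := congrArg Complex.im hn
  simp only [Complex.sub_im, Complex.log_im, Complex.add_im, Complex.mul_im, Complex.intCast_re,
    Complex.intCast_im, Complex.mul_re, Complex.re_ofNat, Complex.I_re, Complex.ofReal_re,
    Complex.I_im, Complex.ofReal_im, Complex.im_ofNat] at him
  ring_nf at him
  rw [← div_eq_mul_inv] at him
  have hpi := Real.pi_pos
  have harg2 : |Complex.arg (v / w)| ≤ Real.pi / 2 := Complex.abs_arg_le_pi_div_two_iff.mpr hre
  have hn0 : n = 0 := by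
    have heq : (n : ℝ) * (2 * Real.pi) = Complex.arg v - Complex.arg w - Complex.arg (v / w) := by
      linarith [him]
    have h2 : |(n : ℝ)| * (2 * Real.pi) < 2 * Real.pi := by
      have h7 : |(n : ℝ)| * (2 * Real.pi) = |(n : ℝ) * (2 * Real.pi)| := by
        rw [abs_mul, abs_of_pos (by positivity : (0:ℝ) < 2 * Real.pi)]
      rw [h7, heq]
      have := abs_le.mp harg2
      have h3 := abs_lt.mp hargw
      have h4 := abs_lt.mp hargv
      rw [abs_lt]
      constructor <;> nlinarith
    have h5 : |(n : ℝ)| < 1 := by nlinarith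
    have h6 : |n| < 1 := by exact_mod_cast (by rwa [← Int.cast_abs] at h5 : ((|n| : ℤ) : ℝ) < 1)
    rw [abs_lt] at h6; omega
  rw [hn0] at hn
  simpa using hn


set_option maxHeartbeats 2000000 in
/-- If `g(w) = w + 1 + α/w + O(1/w²)` for `|w| > R` and `L(w) = w − α log w`
is injective on the sector `S_R` (with left inverse `Linv` there), then the
conjugated map `ρ = L ∘ g ∘ L⁻¹` has the form `ρ(w) = w + 1 + O(1/w^{1+ε})`
for some `ε > 0`. -/
theorem conjugated_map_form (R : ℝ) (hR : 1 < R) (g : ℂ → ℂ) (α : ℂ)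
    (hg : DifferentiableOn ℂ g {w : ℂ | R < ‖w‖})
    (C : ℝ) (hC : 0 < C)
    (hgasym : ∀ w : ℂ, R < ‖w‖ →
      ‖g w - w - 1 - α / w‖ ≤ C / ‖w‖ ^ 2)
    (hgmaps : Set.MapsTo g (fatouSector R) (fatouSector R))
    (L : ℂ → ℂ) (hL : ∀ w, L w = w - α * Complex.log w)
    (hLinj : Set.InjOn L (fatouSector R))
    (Linv : ℂ → ℂ) (hLinv : ∀ w ∈ fatouSector R, Linv (L w) = w) :
    ∃ ε > (0 : ℝ), ∃ C' > (0 : ℝ), ∃ R' ≥ R,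
      ∀ z ∈ L '' fatouSector R, R' < ‖z‖ →
        ‖L (g (Linv z)) - z - 1‖ ≤ C' / ‖z‖ ^ (1 + ε) := by
  have hpi := Real.pi_pos
  obtain ⟨A, hA⟩ : ∃ a, ‖α‖ = a := ⟨_, rfl⟩
  have hA0 : 0 ≤ A := hA ▸ norm_nonneg α
  set M : ℝ := R + 2 * (1 + A + C) with hMdef
  have hM1 : 1 < M := by nlinarith
  set Ctot : ℝ := C + A * (A + C) + 2 * A * (1 + A + C) ^ 2 with hCtotdef
  have hCtot0 : 0 < Ctot := by nlinarith [sq_nonneg (1 + A + C)]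
  have hAM : 0 < (1 + A) * M := by nlinarith
  have hApi : 0 ≤ A * Real.pi := mul_nonneg hA0 hpi.le
  refine ⟨1, one_pos, Ctot * (2 + 2 * A) ^ 2 + 1,
    by nlinarith [sq_nonneg (2 + 2 * A)],
    2 * (1 + A) * M + 2 * A * Real.pi + R, by nlinarith, ?_⟩
  rintro z ⟨w, hwS, rfl⟩ hz
  rw [hLinv w hwS]
  obtain ⟨hwR, hwarg⟩ := hwS
  have hgwS := hgmaps ⟨hwR, hwarg⟩
  obtain ⟨hgwR, hgwarg⟩ := hgwS
  have hw1 : 1 < ‖w‖ := hR.trans hwR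
  have hW0 : 0 < ‖w‖ := by linarith
  have hW2 : (1:ℝ) ≤ ‖w‖ ^ 2 := by nlinarith [sq_nonneg (‖w‖ - 1)]
  have hw0 : w ≠ 0 := by
    intro h; rw [h] at hw1; simp at hw1; linarith
  have hgw0 : g w ≠ 0 := by
    intro h; rw [h] at hgwR; simp at hgwR; linarith
  have hZ0 : 0 < ‖L w‖ := by linarith [hAM, hApi, hz]
  -- |L w| ≤ (1+A)|w| + A π
  have hlogw : ‖Complex.log w‖ ≤ ‖w‖ + Real.pi := by
    have h1 : |Real.log (‖w‖)| ≤ ‖w‖ := by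
      rw [_root_.abs_of_nonneg (Real.log_nonneg hw1.le)]
      exact Real.log_le_self hW0.le
    have h2 := Complex.abs_arg_le_pi w
    calc ‖Complex.log w‖ ≤ |(Complex.log w).re| + |(Complex.log w).im| :=
      Complex.norm_le_abs_re_add_abs_im _
    _ ≤ ‖w‖ + Real.pi := by rw [Complex.log_re, Complex.log_im]; linarith
  have hzw : ‖L w‖ ≤ (1 + A) * ‖w‖ + A * Real.pi := by
    rw [hL]
    calc ‖w - α * Complex.log w‖
        ≤ ‖w‖ + ‖α * Complex.log w‖ := by
          simpa using norm_sub_le w (α * Complex.log w)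
    _ = ‖w‖ + A * ‖Complex.log w‖ := by rw [norm_mul, hA]
    _ ≤ (1 + A) * ‖w‖ + A * Real.pi := by
          have h3 := mul_le_mul_of_nonneg_left hlogw hA0
          rw [mul_add] at h3
          linarith
  -- |w| > M and |L w| ≤ (2+2A)|w|
  have hWM : M < ‖w‖ := by
    have h1 : (1 + A) * M < (1 + A) * ‖w‖ := by linarith
    exact lt_of_mul_lt_mul_left h1 (by linarith)
  have hZW : ‖L w‖ ≤ (2 + 2 * A) * ‖w‖ := by linarith
  -- error analysis
  have hE : ‖g w - w - 1 - α / w‖ ≤ C / ‖w‖ ^ 2 := hgasym w hwR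
  have hCW : C / ‖w‖ ^ 2 ≤ C := by
    rw [div_le_iff₀ (by positivity)]
    have h3 := mul_le_mul_of_nonneg_left hW2 hC.le
    linarith
  have habs_aw : ‖α / w‖ ≤ A := by
    rw [norm_div, hA, div_le_iff₀ hW0]
    have h3 := mul_le_mul_of_nonneg_left hw1.le hA0
    linarith
  have hEdef : g w - w = (g w - w - 1 - α / w) + 1 + α / w := by ring
  have hgw_sub : ‖g w - w‖ ≤ 1 + A + C := by
    have t1 : ‖(g w - w - 1 - α / w) + 1 + α / w‖
        ≤ ‖g w - w - 1 - α / w‖ + 1 + ‖α / w‖ := by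
      calc ‖(g w - w - 1 - α / w) + 1 + α / w‖
          ≤ ‖(g w - w - 1 - α / w) + 1‖ + ‖α / w‖ :=
            norm_add_le _ _
      _ ≤ ‖g w - w - 1 - α / w‖ + 1 + ‖α / w‖ := by
          have := norm_add_le (g w - w - 1 - α / w) 1
          simp only [norm_one] at this
          linarith
    rw [hEdef]
    linarith
  have hu : ‖(g w - w) / w‖ ≤ (1 + A + C) / ‖w‖ := by
    rw [norm_div]
    gcongr
  have hu2 : ‖(g w - w) / w‖ ≤ 1 / 2 := by
    refine hu.trans ?_
    rw [div_le_iff₀ hW0]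
    rw [hMdef] at hWM
    linarith
  have h1u : (1 : ℂ) + (g w - w) / w = g w / w := by field_simp; ring
  have hre : 0 ≤ (g w / w).re := by
    rw [← h1u]
    have h1 := Complex.abs_re_le_norm ((g w - w) / w)
    have h4 : |((g w - w) / w).re| ≤ 1 / 2 := h1.trans hu2
    have h5 := abs_le.mp h4
    simp only [Complex.add_re, Complex.one_re]
    linarith
  have hlog : Complex.log (g w) - Complex.log w
      = Complex.log (1 + (g w - w) / w) := by
    rw [h1u]
    exact my_log_sub_log hw0 hgw0 hwarg hgwarg hre
  have key : L (g w) - L w - 1 =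
      (g w - w - 1 - α / w) + α * (1 / w - (g w - w) / w)
      + α * ((g w - w) / w - Complex.log (1 + (g w - w) / w)) := by
    rw [hL (g w), hL w, sub_eq_iff_eq_add.mp hlog]
    ring
  have hWW2 : ‖w‖ ≤ ‖w‖ ^ 2 := by nlinarith [sq_nonneg (‖w‖ - 1)]
  have hb1 : ‖1 / w - (g w - w) / w‖ ≤ (A + C) / ‖w‖ ^ 2 := by
    have hid : (1 : ℂ) / w - (g w - w) / w = (-(α / w) - (g w - w - 1 - α / w)) / w := by
      field_simp
      ring
    rw [hid, norm_div]
    have h1 : ‖-(α / w) - (g w - w - 1 - α / w)‖ ≤ (A + C) / ‖w‖ := by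
      have h2 : ‖-(α / w) - (g w - w - 1 - α / w)‖
          ≤ ‖α / w‖ + ‖g w - w - 1 - α / w‖ := by
        simpa using norm_sub_le (-(α / w)) (g w - w - 1 - α / w)
      have h3 : ‖α / w‖ = A / ‖w‖ := by rw [norm_div, hA]
      have h4 : C / ‖w‖ ^ 2 ≤ C / ‖w‖ :=
        div_le_div_of_nonneg_left hC.le hW0 hWW2
      have h5 : A / ‖w‖ + C / ‖w‖ = (A + C) / ‖w‖ := by
        rw [← add_div]
      linarith
    calc ‖-(α / w) - (g w - w - 1 - α / w)‖ / ‖w‖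
        ≤ ((A + C) / ‖w‖) / ‖w‖ := by gcongr
    _ = (A + C) / ‖w‖ ^ 2 := by rw [div_div, ← sq]
  have hb2 : ‖(g w - w) / w - Complex.log (1 + (g w - w) / w)‖
      ≤ (1 + A + C) ^ 2 / ‖w‖ ^ 2 := by
    have h1 : ‖Complex.log (1 + (g w - w) / w) - (g w - w) / w‖
        ≤ ‖(g w - w) / w‖ ^ 2 * (1 - ‖(g w - w) / w‖)⁻¹ / 2 :=
      Complex.norm_log_one_add_sub_self_le (by linarith)
    rw [norm_sub_rev]
    have h3 : (1 - ‖(g w - w) / w‖)⁻¹ ≤ 2 := by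
      calc (1 - ‖(g w - w) / w‖)⁻¹ ≤ ((1:ℝ)/2)⁻¹ :=
            inv_anti₀ (by norm_num) (by linarith)
      _ = 2 := by norm_num
    have h4 : ‖(g w - w) / w‖ ^ 2 ≤ ((1 + A + C) / ‖w‖) ^ 2 := by
      gcongr
    calc ‖Complex.log (1 + (g w - w) / w) - (g w - w) / w‖
        ≤ ‖(g w - w) / w‖ ^ 2 * (1 - ‖(g w - w) / w‖)⁻¹ / 2 := h1
    _ ≤ ((1 + A + C) / ‖w‖) ^ 2 * 2 / 2 := by
        have h7 : (0:ℝ) ≤ (1 - ‖(g w - w) / w‖)⁻¹ := inv_nonneg.mpr (by linarith)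
        have h8 := mul_le_mul h4 h3 h7 (sq_nonneg ((1 + A + C) / ‖w‖))
        linarith
    _ = (1 + A + C) ^ 2 / ‖w‖ ^ 2 := by rw [div_pow]; ring
  have hmain : ‖L (g w) - L w - 1‖ ≤ Ctot / ‖w‖ ^ 2 := by
    rw [key]
    calc ‖(g w - w - 1 - α / w) + α * (1 / w - (g w - w) / w)
          + α * ((g w - w) / w - Complex.log (1 + (g w - w) / w))‖
        ≤ ‖(g w - w - 1 - α / w) + α * (1 / w - (g w - w) / w)‖
          + ‖α * ((g w - w) / w - Complex.log (1 + (g w - w) / w))‖ :=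
          norm_add_le _ _
    _ ≤ (‖g w - w - 1 - α / w‖ + ‖α * (1 / w - (g w - w) / w)‖)
          + ‖α * ((g w - w) / w - Complex.log (1 + (g w - w) / w))‖ := by
        gcongr
        exact norm_add_le _ _
    _ = ‖g w - w - 1 - α / w‖ + A * ‖1 / w - (g w - w) / w‖
          + A * ‖(g w - w) / w - Complex.log (1 + (g w - w) / w)‖ := by
        rw [norm_mul, norm_mul, hA]
    _ ≤ C / ‖w‖ ^ 2 + A * ((A + C) / ‖w‖ ^ 2)
          + A * ((1 + A + C) ^ 2 / ‖w‖ ^ 2) := by gcongr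
    _ = (C + A * (A + C) + A * (1 + A + C) ^ 2) / ‖w‖ ^ 2 := by ring
    _ ≤ Ctot / ‖w‖ ^ 2 := by
        gcongr
        rw [hCtotdef]
        linarith [mul_nonneg hA0 (sq_nonneg (1 + A + C))]
  rw [show (1 : ℝ) + 1 = ((2 : ℕ) : ℝ) by norm_num, Real.rpow_natCast]
  refine hmain.trans ?_
  rw [div_le_div_iff₀ (by positivity) (pow_pos hZ0 2)]
  have hzz := mul_le_mul hZW hZW hZ0.le
    (by positivity : (0:ℝ) ≤ (2 + 2 * A) * ‖w‖)
  have hzz2 := mul_le_mul_of_nonneg_left hzz hCtot0.le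
  nlinarith [sq_nonneg (‖w‖), pow_pos hW0 2]
end

section
/- For α ∈ ℂ and R sufficiently large, the map L_α(w) = w + α·log w (principal branch) is injective on the sector S_R = {w ∈ ℂ : |w| > R, |Arg w| < 3π/4}. -/
/-- Key estimate: for `u` with `0 ≤ Re u` and `|Im u| < 3π/2`,
`|u| ≤ 5 |e^u - 1|`. -/
lemma key_exp_bound (u : ℂ) (ht : 0 ≤ u.re) (hθ : |u.im| < 3 * Real.pi / 2) :
    ‖u‖ ≤ 5 * ‖Complex.exp u - 1‖ := by
  set t := u.re with htdef
  set θ := u.im with hθdef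
  have hpi : (3.14 : ℝ) < Real.pi := by
    have := Real.pi_gt_d6; linarith
  have hpi' : Real.pi < 3.15 := by
    have := Real.pi_lt_d2; linarith
  have hE : Real.exp t ≠ 0 := (Real.exp_pos t).ne'
  have hA2 : (‖Complex.exp u - 1‖)^2 =
      (Real.exp t * Real.cos θ - 1)^2 + (Real.exp t * Real.sin θ)^2 := by
    rw [Complex.sq_norm, Complex.normSq_apply]
    simp [Complex.exp_re, Complex.exp_im]
    ring
  have hU2 : (‖u‖)^2 = t^2 + θ^2 := by
    rw [Complex.sq_norm, Complex.normSq_apply]; ring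
  have hAnn : 0 ≤ ‖Complex.exp u - 1‖ := norm_nonneg _
  have hUnn : 0 ≤ ‖u‖ := norm_nonneg _
  have hEt : 1 + t ≤ Real.exp t := by have := Real.add_one_le_exp t; linarith
  rw [← pow_le_pow_iff_left₀ hUnn (by positivity) (two_ne_zero)]
  rw [hU2, mul_pow, hA2]
  by_cases hc : Real.cos θ ≤ 0
  · -- |e^u - 1| ≥ e^t, |u| ≤ t + 3π/2 ≤ 5 e^t
    have hsc : Real.sin θ ^ 2 + Real.cos θ ^ 2 = 1 := Real.sin_sq_add_cos_sq θ
    have hθ' : |θ| < 3 * Real.pi / 2 := hθ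
    have habs : θ^2 < (3 * Real.pi / 2)^2 := by
      have := abs_nonneg θ
      nlinarith [sq_abs θ]
    have hrhs : Real.exp t ^ 2 ≤ (Real.exp t * Real.cos θ - 1)^2 + (Real.exp t * Real.sin θ)^2 := by
      nlinarith [mul_nonneg (neg_nonneg.2 hc) (Real.exp_pos t).le]
    have hEsq : (1 + t)^2 ≤ Real.exp t ^ 2 := pow_le_pow_left₀ (by linarith) hEt 2
    nlinarith [hrhs, hEsq, habs, ht, hpi, hpi']
  · push_neg at hc
    -- cos θ > 0 with |θ| < 3π/2 forces |θ| < π/2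
    have hθsmall : |θ| < Real.pi / 2 := by
      by_contra h
      push_neg at h
      have : Real.cos |θ| ≤ 0 :=
        Real.cos_nonpos_of_pi_div_two_le_of_le h (by linarith)
      rw [Real.cos_abs] at this
      linarith
    have hjordan : Real.cos θ ≤ 1 - 2 / Real.pi ^ 2 * θ ^ 2 :=
      Real.cos_le_one_sub_mul_cos_sq (by linarith [Real.pi_pos])
    have hπpos : (0:ℝ) < Real.pi := Real.pi_pos
    have hsc : Real.sin θ ^ 2 + Real.cos θ ^ 2 = 1 := Real.sin_sq_add_cos_sq θ
    have hπ2 : Real.pi ^ 2 < 10 := by nlinarith [hpi, hpi']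
    -- (E cos θ - 1)² + (E sin θ)² = (E-1)² + 2E(1 - cos θ) ≥ t² + 4θ²/π²
    have h1 : 2 / Real.pi ^ 2 * θ ^ 2 ≤ 1 - Real.cos θ := by linarith
    have hexp1 : (1:ℝ) ≤ Real.exp t := by linarith
    have hid : (Real.exp t * Real.cos θ - 1)^2 + (Real.exp t * Real.sin θ)^2 =
        (Real.exp t - 1)^2 + 2 * Real.exp t * (1 - Real.cos θ) := by
      linear_combination (Real.exp t ^ 2) * hsc
    have h2 : t^2 ≤ (Real.exp t - 1)^2 := pow_le_pow_left₀ ht (by linarith) 2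
    have h3 : (1/5) * θ^2 ≤ 2 / Real.pi ^ 2 * θ ^ 2 := by
      have hc5 : (1/5:ℝ) ≤ 2 / Real.pi ^ 2 := by
        rw [le_div_iff₀ (by positivity)]
        linarith [hπ2]
      exact mul_le_mul_of_nonneg_right hc5 (sq_nonneg θ)
    have h4 : (1/5) * θ^2 ≤ 2 * Real.exp t * (1 - Real.cos θ) := by
      calc (1/5) * θ^2 = 1 * ((1/5) * θ^2) := by ring
        _ ≤ (2 * Real.exp t) * ((1/5) * θ^2) := by
            apply mul_le_mul_of_nonneg_right (by linarith)
            have := sq_nonneg θ; linarith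
        _ ≤ (2 * Real.exp t) * (1 - Real.cos θ) :=
            mul_le_mul_of_nonneg_left (h3.trans h1) (by linarith)
        _ = 2 * Real.exp t * (1 - Real.cos θ) := by ring
    rw [hid]; linarith [sq_nonneg θ, sq_nonneg (Real.exp t - 1)]

/-- Injectivity step (ordered version). -/
lemma Lalpha_step (α : ℂ) (R : ℝ) (hR : 5 * ‖α‖ + 1 ≤ R) {w₁ w₂ : ℂ}
    (h1 : w₁ ∈ fatouSector R) (h2 : w₂ ∈ fatouSector R)
    (hle : ‖w₁‖ ≤ ‖w₂‖)
    (heq : w₁ + α * Complex.log w₁ = w₂ + α * Complex.log w₂) : w₁ = w₂ := by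
  obtain ⟨hr1, ha1⟩ := h1
  obtain ⟨hr2, ha2⟩ := h2
  have hR0 : (0:ℝ) < R := lt_of_lt_of_le (by positivity) hR
  have hw1pos : (0:ℝ) < ‖w₁‖ := lt_trans hR0 hr1
  have hw2pos : (0:ℝ) < ‖w₂‖ := lt_trans hR0 hr2
  have hw1 : w₁ ≠ 0 := by simpa using hw1pos.ne'
  have hw2 : w₂ ≠ 0 := by simpa using hw2pos.ne'
  set u := Complex.log w₂ - Complex.log w₁ with hu
  have hure : 0 ≤ u.re := by
    have : u.re = Real.log (‖w₂‖) - Real.log (‖w₁‖) := by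
      simp [hu, Complex.log_re]
    rw [this]
    have := Real.log_le_log hw1pos hle
    linarith
  have huim : |u.im| < 3 * Real.pi / 2 := by
    have : u.im = Complex.arg w₂ - Complex.arg w₁ := by
      simp [hu, Complex.log_im]
    rw [this]
    calc |Complex.arg w₂ - Complex.arg w₁| ≤ |Complex.arg w₂| + |Complex.arg w₁| :=
        abs_sub _ _
      _ < 3 * Real.pi / 2 := by linarith
  have hexpu : Complex.exp u = w₂ / w₁ := by
    rw [hu, Complex.exp_sub, Complex.exp_log hw1, Complex.exp_log hw2]
  have hdiff : w₂ - w₁ = w₁ * (Complex.exp u - 1) := by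
    rw [hexpu]; field_simp
  have hlin : w₂ - w₁ = -(α * u) := by
    rw [hu]; linear_combination -heq
  -- combine
  have hkey := key_exp_bound u hure huim
  have habs1 : ‖w₂ - w₁‖ = ‖w₁‖ * ‖Complex.exp u - 1‖ := by
    rw [hdiff, norm_mul]
  have habs2 : ‖w₂ - w₁‖ = ‖α‖ * ‖u‖ := by
    rw [hlin]; simp [map_mul]
  have hu0 : ‖u‖ = 0 := by
    by_contra h
    have hupos : 0 < ‖u‖ := lt_of_le_of_ne (norm_nonneg u) (Ne.symm h)
    have h5 : ‖u‖ / 5 ≤ ‖Complex.exp u - 1‖ := by linarith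
    have : R * (‖u‖ / 5) ≤ ‖w₁‖ * ‖Complex.exp u - 1‖ := by
      apply mul_le_mul hr1.le h5 (by positivity) hw1pos.le
    rw [← habs1, habs2] at this
    nlinarith
  have : u = 0 := by simpa using hu0
  have : w₂ / w₁ = 1 := by rw [← hexpu, this, Complex.exp_zero]
  field_simp at this
  exact this.symm

/-- For `α ∈ ℂ` and `R` sufficiently large, `L_α(w) = w + α log w`
(principal branch) is injective on the sector `S_R`. -/
theorem Lalpha_injective_on_sector (α : ℂ) :
    ∃ R₀ > (0 : ℝ), ∀ R ≥ R₀,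
      Set.InjOn (fun w : ℂ => w + α * Complex.log w) (fatouSector R) := by
  refine ⟨5 * ‖α‖ + 1, by positivity, fun R hR w₁ h1 w₂ h2 heq => ?_⟩
  simp only at heq
  rcases le_total (‖w₁‖) (‖w₂‖) with h | h
  · exact Lalpha_step α R hR h1 h2 h heq
  · exact (Lalpha_step α R hR h2 h1 h heq.symm).symm
end

section
/- Let ρ be holomorphic on a domain W ⊆ ℂ with ρ(W) ⊆ W, satisfying |ρ(w) − w − 1| ≤ C/|w|^{1+ε} on W for constants C > 0, ε > 0, where W ⊆ {|w| > R, Re(w) > −|Im(w)|} with R large enough that Re(ρⁿ(w)) ≥ Re(w) + n/2 for all n. Then the sequence φ_n(w) = ρⁿ(w) − n converges uniformly on compact subsets of W to a holomorphic map φ satisfying φ(ρ(w)) = φ(w) + 1. -/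
open Filter Topology

private lemma iter_diffOn {W : Set ℂ} {ρ : ℂ → ℂ} (hρhol : DifferentiableOn ℂ ρ W)
    (hρmaps : Set.MapsTo ρ W W) (n : ℕ) : DifferentiableOn ℂ (ρ^[n]) W := by
  induction n with
  | zero => simpa using differentiableOn_id
  | succ n ih =>
      rw [Function.iterate_succ']
      exact hρhol.comp ih (hρmaps.iterate n)

private lemma telescope (ρ : ℂ → ℂ) (x : ℂ) (n : ℕ) :
    ∑ k ∈ Finset.range n, (ρ^[k+1] x - ρ^[k] x - 1) = ρ^[n] x - x - n := by
  induction n with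
  | zero => simp
  | succ n ih => rw [Finset.sum_range_succ, ih]; push_cast; ring

/-- Convergence of the incoming Fatou coordinate in one dimension:
if `ρ(w) = w + 1 + O(1/w^{1+ε})` on an invariant domain `W` on which the real
parts of orbits grow linearly, then `φ_n(w) = ρⁿ(w) − n` converges locally
uniformly on `W` to a holomorphic `φ` with `φ(ρ(w)) = φ(w) + 1`. -/
theorem incoming_fatou_coordinate_exists
    (W : Set ℂ) (hW : IsOpen W) (ρ : ℂ → ℂ)
    (hρhol : DifferentiableOn ℂ ρ W) (hρmaps : Set.MapsTo ρ W W)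
    (C ε R : ℝ) (hC : 0 < C) (hε : 0 < ε) (hR : 1 < R)
    (hWsub : W ⊆ {w : ℂ | R < ‖w‖ ∧ -|w.im| < w.re})
    (hbound : ∀ w ∈ W, ‖ρ w - w - 1‖ ≤ C / ‖w‖ ^ (1 + ε))
    (hgrow : ∀ w ∈ W, ∀ n : ℕ, w.re + n / 2 ≤ (ρ^[n] w).re) :
    ∃ φ : ℂ → ℂ,
      TendstoLocallyUniformlyOn (fun (n : ℕ) (w : ℂ) => ρ^[n] w - n) φ atTop W ∧
      DifferentiableOn ℂ φ W ∧
      ∀ w ∈ W, φ (ρ w) = φ w + 1 := by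
  set p : ℝ := 1 + ε with hp
  have hp1 : 1 < p := by rw [hp]; linarith
  have hp0 : 0 ≤ p := by linarith
  set g : ℕ → ℂ → ℂ := fun n x => ρ^[n+1] x - ρ^[n] x - 1 with hg
  set φ : ℂ → ℂ := fun x => x + ∑' n, g n x with hφ
  have hEq : (fun (n : ℕ) (x : ℂ) => ρ^[n] x - (n : ℂ)) =
      fun (n : ℕ) (x : ℂ) => x + ∑ k ∈ Finset.range n, g k x := by
    funext n x
    rw [hg, telescope]; ring
  have key : ∀ K ⊆ W, IsCompact K →
      TendstoUniformlyOn (fun (n : ℕ) (x : ℂ) => ρ^[n] x - (n : ℂ)) φ atTop K := by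
    intro K hKW hK
    rcases K.eq_empty_or_nonempty with rfl | hne
    · simp [tendstoUniformlyOn_empty]
    · obtain ⟨x0, hx0K, hmin⟩ := hK.exists_isMinOn hne Complex.continuous_re.continuousOn
      set m : ℝ := x0.re with hm
      set u : ℕ → ℝ := fun n => C / max R (m + n/2) ^ p with hu
      have hbase : ∀ n : ℕ, (0:ℝ) < max R (m + n/2) :=
        fun n => lt_of_lt_of_le (by linarith) (le_max_left _ _)
      -- summability of u
      have hsum : Summable u := by
        have hsg : Summable (fun n : ℕ => (n:ℝ) ^ (-p)) :=
          Real.summable_nat_rpow.2 (by linarith)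
        apply summable_of_isBigO_nat hsg
        rw [Asymptotics.isBigO_iff]
        refine ⟨C * 4 ^ p, ?_⟩
        filter_upwards [eventually_ge_atTop (⌈4 * |m|⌉₊ + 1)] with n hn
        have hn1 : (1:ℝ) ≤ (n:ℝ) := by
          have : 1 ≤ n := le_trans (Nat.le_add_left _ _) hn
          exact_mod_cast this
        have hnm : 4 * |m| ≤ (n:ℝ) := by
          have h1 : (⌈4 * |m|⌉₊ : ℝ) ≤ n := by exact_mod_cast le_trans (Nat.le_succ _) hn
          exact le_trans (Nat.le_ceil _) h1
        have hq : (n:ℝ)/4 ≤ m + n/2 := by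
          have : -|m| ≤ m := neg_abs_le m
          linarith
        have hq0 : (0:ℝ) < (n:ℝ)/4 := by linarith
        have h1 : u n ≤ C / ((n:ℝ)/4) ^ p := by
          simp only [hu]
          gcongr
          exact le_trans hq (le_max_right _ _)
        have h2 : C / ((n:ℝ)/4) ^ p = C * 4 ^ p * (n:ℝ) ^ (-p) := by
          rw [Real.div_rpow (by linarith) (by norm_num : (0:ℝ) ≤ 4),
            Real.rpow_neg (by linarith)]
          field_simp
        have hun : 0 ≤ u n := by
          simp only [hu]
          positivity
        rw [Real.norm_eq_abs, Real.norm_eq_abs, abs_of_nonneg hun,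
          abs_of_nonneg (Real.rpow_nonneg (by linarith) _)]
        calc u n ≤ C / ((n:ℝ)/4) ^ p := h1
          _ = C * 4 ^ p * (n:ℝ) ^ (-p) := h2
      -- termwise bound
      have hle : ∀ (n : ℕ), ∀ x ∈ K, ‖g n x‖ ≤ u n := by
        intro n x hx
        have hxW : x ∈ W := hKW hx
        set y : ℂ := ρ^[n] x with hy
        have hyW : y ∈ W := hρmaps.iterate n hxW
        have habs : max R (m + n/2) ≤ ‖y‖ := by
          refine max_le (le_of_lt (hWsub hyW).1) ?_
          have h1 : m ≤ x.re := hmin hx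
          have h2 : x.re + n/2 ≤ y.re := hgrow x hxW n
          have h3 : y.re ≤ ‖y‖ := Complex.re_le_norm y
          linarith
        have hgnx : g n x = ρ y - y - 1 := by
          rw [hg]; simp only [Function.iterate_succ_apply', hy]
        calc ‖g n x‖ = ‖ρ y - y - 1‖ := by rw [hgnx]
          _ ≤ C / ‖y‖ ^ p := hbound y hyW
          _ ≤ u n := by
              simp only [hu]
              gcongr
      have htsum := tendstoUniformlyOn_tsum_nat hsum hle
      have hid : TendstoUniformlyOn (fun (_ : ℕ) (x : ℂ) => x) (fun x => x) atTop K := by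
        rw [Metric.tendstoUniformlyOn_iff]
        intro δ hδ
        filter_upwards with n x hx
        simpa using hδ
      have := hid.add htsum
      rw [hEq]
      exact this
  have htlu : TendstoLocallyUniformlyOn (fun (n : ℕ) (w : ℂ) => ρ^[n] w - (n:ℂ)) φ atTop W :=
    (tendstoLocallyUniformlyOn_iff_forall_isCompact hW).2 key
  refine ⟨φ, htlu, ?_, ?_⟩
  · refine htlu.differentiableOn (Eventually.of_forall fun n => ?_) hW
    exact (iter_diffOn hρhol hρmaps n).sub (differentiableOn_const _)
  · intro w hw
    have h1 : Tendsto (fun n : ℕ => ρ^[n] (ρ w) - (n:ℂ)) atTop (𝓝 (φ (ρ w))) :=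
      htlu.tendsto_at (hρmaps hw)
    have h2 : Tendsto (fun n : ℕ => ρ^[n] w - (n:ℂ)) atTop (𝓝 (φ w)) :=
      htlu.tendsto_at hw
    have h3 : Tendsto (fun n : ℕ => ρ^[n+1] w - ((n:ℂ)+1)) atTop (𝓝 (φ w)) := by
      have := h2.comp (tendsto_add_atTop_nat 1)
      convert this using 2 with n
      simp only [Function.comp_apply]
      push_cast; ring
    have h4 : Tendsto (fun n : ℕ => ρ^[n] (ρ w) - (n:ℂ)) atTop (𝓝 (φ w + 1)) := by
      have h3' : Tendsto (fun n : ℕ => (ρ^[n+1] w - ((n:ℂ)+1)) + 1) atTop (𝓝 (φ w + 1)) :=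
        h3.add tendsto_const_nhds
      convert h3' using 2 with n
      rw [Function.iterate_succ_apply]
      ring
    exact tendsto_nhds_unique h1 h4
end

section
/- Let ρ(u) = u + 1 + O(1/u) be holomorphic on {|u| > R}. Then there exists a holomorphic injective map ψ : S_R → ℂ of the form ψ(u) = u + O(log u) such that ψ⁻¹∘ρ∘ψ(u) = u + 1 on S_R = {|u| > R', |Arg u| < 3π/4} for some R' ≥ R. -/
open Filter Metric Set Complex

noncomputable section FatouAux

namespace FatouAux

/-- the errr function -/
def err (ρ : ℂ → ℂ) (u : ℂ) : ℂ := ρ u - u - 1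

/-- the linear gauge -/
def gg (u : ℂ) : ℝ := u.re + 2 * |u.im|

/-- the invariant domain -/
def Om (M : ℝ) : Set ℂ := {u : ℂ | M < gg u}

structure Setup (ρ : ℂ → ℂ) (R C M : ℝ) : Prop where
  hR : 1 < R
  hC : 0 < C
  hhol : DifferentiableOn ℂ ρ {u : ℂ | R < ‖u‖}
  hρ : ∀ u : ℂ, R < ‖u‖ → ‖ρ u - u - 1‖ ≤ C / ‖u‖
  hM1 : 24 * (R + 1) ≤ M
  hM2 : 18 * C ≤ M
  hM3 : 9216 * C ≤ M
  hM4 : 1 ≤ M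

variable {ρ : ℂ → ℂ} {R C M : ℝ}

lemma gg_le_three (u : ℂ) : gg u ≤ 3 * ‖u‖ := by
  unfold gg
  have h1 : ‖u‖ ^ 2 = u.re ^ 2 + u.im ^ 2 := by
    rw [Complex.sq_norm, Complex.normSq_apply]; ring
  have h2 : (0:ℝ) ≤ ‖u‖ := norm_nonneg u
  have h3 : |u.im| ^ 2 = u.im ^ 2 := sq_abs _
  have h4 : u.re ≤ |u.re| := le_abs_self _
  have h5 : |u.re| ^ 2 = u.re ^ 2 := sq_abs _
  rcases le_or_gt (u.re + 2 * |u.im|) 0 with h | h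
  · linarith [mul_nonneg (by norm_num : (0:ℝ) ≤ 3) h2]
  · nlinarith [sq_nonneg (2 * u.re - |u.im|), abs_nonneg u.im]

lemma gg_lipschitz (u v : ℂ) : gg u - gg v ≤ 3 * ‖u - v‖ := by
  have h1 : u.re - v.re ≤ |(u - v).re| := by
    rw [Complex.sub_re]; exact le_abs_self _
  have h2 : |u.im| - |v.im| ≤ |(u - v).im| := by
    rw [Complex.sub_im]; exact (abs_sub_abs_le_abs_sub _ _)
  have h3 : |(u - v).re| ≤ ‖u - v‖ := Complex.abs_re_le_norm _
  have h4 : |(u - v).im| ≤ ‖u - v‖ := Complex.abs_im_le_norm _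
  unfold gg; linarith

lemma abs_ge_of_mem (hM : 0 < M) {u : ℂ} (hu : u ∈ Om M) : gg u / 3 ≤ ‖u‖ := by
  have := gg_le_three u
  linarith [hu.out]

/-- sector points have large gauge -/
lemma sector_gauge {R' : ℝ} (hR' : 0 < R') {w : ℂ} (hw : w ∈ fatouSector R') :
    ‖w‖ / 2 < gg w := by
  obtain ⟨hw1, hw2⟩ := hw
  have hw0 : w ≠ 0 := by
    intro h; rw [h] at hw1; simp at hw1; linarith
  have habs : 0 < ‖w‖ := norm_pos_iff.mpr hw0
  have hcos : Real.cos w.arg = w.re / ‖w‖ := Complex.cos_arg hw0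
  have hsin : Real.sin w.arg = w.im / ‖w‖ := Complex.sin_arg w
  set θ := w.arg with hθ
  have hθ1 : -Real.pi < θ := Complex.neg_pi_lt_arg w
  have hθ2 : θ ≤ Real.pi := Complex.arg_le_pi w
  have hπ : (0:ℝ) < Real.pi := Real.pi_pos
  -- |sin θ| = sin |θ|
  have hsinabs : |Real.sin θ| = Real.sin |θ| := by
    rcases le_or_gt 0 θ with h | h
    · rw [_root_.abs_of_nonneg h, _root_.abs_of_nonneg (Real.sin_nonneg_of_nonneg_of_le_pi h hθ2)]
    · rw [_root_.abs_of_neg h, Real.sin_neg, abs_of_nonpos]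
      have : Real.sin (-θ) ≥ 0 := Real.sin_nonneg_of_nonneg_of_le_pi (by linarith) (by linarith)
      rw [Real.sin_neg] at this; linarith
  have hcosabs : Real.cos θ = Real.cos |θ| := (Real.cos_abs θ).symm
  set t := |θ| with ht
  have ht0 : 0 ≤ t := abs_nonneg θ
  have ht34 : t < 3 * Real.pi / 4 := hw2
  -- key: cos t + 2 sin t > 1/2
  have hkey : 1/2 < Real.cos t + 2 * Real.sin t := by
    rcases le_or_gt t (Real.pi / 2) with h | h
    · have hsin0 : 0 ≤ Real.sin t := Real.sin_nonneg_of_nonneg_of_le_pi ht0 (by linarith)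
      have hcos0 : 0 ≤ Real.cos t := Real.cos_nonneg_of_mem_Icc ⟨by linarith, h⟩
      have hsq : Real.sin t ^ 2 + Real.cos t ^ 2 = 1 := Real.sin_sq_add_cos_sq t
      nlinarith [sq_nonneg (Real.sin t + Real.cos t)]
    · have hc : Real.cos (3 * Real.pi / 4) < Real.cos t :=
        Real.cos_lt_cos_of_nonneg_of_le_pi ht0 (by linarith) ht34
      have hc34 : Real.cos (3 * Real.pi / 4) = -(Real.sqrt 2 / 2) := by
        have : (3:ℝ) * Real.pi / 4 = Real.pi - Real.pi / 4 := by ring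
        rw [this, Real.cos_pi_sub, Real.cos_pi_div_four]
      have hs : Real.cos (t - Real.pi/2) = Real.sin t := by
        rw [← Real.cos_neg, neg_sub, Real.cos_pi_div_two_sub]
      have hs2 : Real.cos (Real.pi/4) < Real.cos (t - Real.pi/2) := by
        apply Real.cos_lt_cos_of_nonneg_of_le_pi (by linarith) (by linarith) (by linarith)
      rw [Real.cos_pi_div_four] at hs2
      have h2 : (1:ℝ) < Real.sqrt 2 := by
        nlinarith [Real.sq_sqrt (by norm_num : (0:ℝ) ≤ 2), Real.sqrt_nonneg 2]
      rw [hc34] at hc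
      rw [hs] at hs2
      nlinarith
  have hre : w.re = ‖w‖ * Real.cos θ := by
    rw [hcos]; field_simp
  have him : |w.im| = ‖w‖ * |Real.sin θ| := by
    rw [hsin, abs_div, _root_.abs_of_pos habs]; field_simp
  unfold gg
  rw [hre, him, hsinabs, hcosabs]
  have := mul_lt_mul_of_pos_left hkey habs
  calc ‖w‖ / 2 = ‖w‖ * (1/2) := by ring
  _ < ‖w‖ * (Real.cos t + 2 * Real.sin t) := by
      exact mul_lt_mul_of_pos_left hkey habs
  _ = ‖w‖ * Real.cos t + 2 * (‖w‖ * Real.sin t) := by ring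

end FatouAux
end FatouAux
namespace FatouAux
variable {ρ : ℂ → ℂ} {R C M : ℝ}

lemma Setup.hM0 (h : Setup ρ R C M) : 0 < M := lt_of_lt_of_le one_pos h.hM4

lemma Setup.om_abs (h : Setup ρ R C M) {u : ℂ} (hu : u ∈ Om M) : M / 3 < ‖u‖ := by
  have h1 := gg_le_three u
  have h2 : M < gg u := hu
  linarith

lemma Setup.om_subset (h : Setup ρ R C M) {u : ℂ} (hu : u ∈ Om M) : R < ‖u‖ := by
  have h1 := h.om_abs hu
  have h2 := h.hM1
  have h3 := h.hR
  linarith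

lemma Setup.err_le (h : Setup ρ R C M) {u : ℂ} (hu : u ∈ Om M) :
    ‖err ρ u‖ ≤ 3 * C / gg u := by
  have h1 := h.hρ u (h.om_subset hu)
  have h2 : M < gg u := hu
  have h3 : gg u / 3 ≤ ‖u‖ := by
    have := gg_le_three u; linarith
  have h4 : 0 < gg u := lt_of_le_of_lt h.hM0.le h2
  calc ‖err ρ u‖ ≤ C / ‖u‖ := h1
  _ ≤ C / (gg u / 3) := by
      apply div_le_div_of_nonneg_left h.hC.le (by positivity) h3
  _ = 3 * C / gg u := by field_simp

lemma Setup.gg_step (h : Setup ρ R C M) {u : ℂ} (hu : u ∈ Om M) :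
    gg u + 1/2 ≤ gg (ρ u) := by
  have h2 : M < gg u := hu
  have h4 : 0 < gg u := lt_of_le_of_lt h.hM0.le h2
  have he : ‖err ρ u‖ ≤ 3 * C / gg u := h.err_le hu
  have hrw : ρ u = (u + 1) + err ρ u := by unfold err; ring
  have hlip : gg (u + 1) - gg (ρ u) ≤ 3 * ‖(u+1) - ρ u‖ := gg_lipschitz _ _
  have habs : ‖(u+1) - ρ u‖ = ‖err ρ u‖ := by
    rw [show (u+1) - ρ u = -(err ρ u) by unfold err; ring, norm_neg]
  have hgg1 : gg (u + 1) = gg u + 1 := by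
    unfold gg; simp; ring
  have hCg : 3 * C / gg u ≤ 1/6 := by
    rw [div_le_iff₀ h4]
    have h5 : 18 * C ≤ M := h.hM2
    nlinarith [h.hC.le]
  rw [habs, hgg1] at hlip
  linarith

lemma Setup.om_step (h : Setup ρ R C M) {u : ℂ} (hu : u ∈ Om M) : ρ u ∈ Om M := by
  have h2 : M < gg u := hu
  have := h.gg_step hu
  show M < gg (ρ u)
  linarith

lemma Setup.orbit (h : Setup ρ R C M) {u : ℂ} (hu : u ∈ Om M) (n : ℕ) :
    ρ^[n] u ∈ Om M ∧ gg u + n / 2 ≤ gg (ρ^[n] u) := by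
  induction n with
  | zero => simpa using hu
  | succ n ih =>
    obtain ⟨hmem, hgg⟩ := ih
    have hstep := h.gg_step hmem
    rw [Function.iterate_succ_apply']
    refine ⟨?_, ?_⟩
    · show M < gg (ρ (ρ^[n] u))
      have h2 : M < gg (ρ^[n] u) := hmem
      linarith
    · push_cast; linarith

lemma Setup.orbit_abs (h : Setup ρ R C M) {u : ℂ} (hu : u ∈ Om M) (n : ℕ) :
    (2 * M + n) / 6 ≤ ‖ρ^[n] u‖ := by
  obtain ⟨hmem, hgg⟩ := h.orbit hu n
  have h1 := gg_le_three (ρ^[n] u)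
  have h2 : M < gg u := hu
  linarith

lemma Setup.err_diffOn (h : Setup ρ R C M) :
    DifferentiableOn ℂ (err ρ) {u : ℂ | R < ‖u‖} :=
  (h.hhol.sub differentiableOn_id).sub (differentiableOn_const 1)

lemma isOpen_gtR (R : ℝ) : IsOpen {u : ℂ | R < ‖u‖} :=
  isOpen_lt continuous_const continuous_norm

lemma Setup.deriv_err (h : Setup ρ R C M) {z : ℂ} (hz : 2 * (R + 1) ≤ ‖z‖) :
    ‖deriv (err ρ) z‖ ≤ 4 * C / ‖z‖ ^ 2 := by
  have hR1 : (0:ℝ) < R + 1 := by linarith [h.hR]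
  have hzpos : 0 < ‖z‖ := by linarith
  set r := ‖z‖ / 2 with hrdef
  have hrpos : 0 < r := by positivity
  have hlow : ∀ w : ℂ, dist w z ≤ r → ‖z‖ / 2 ≤ ‖w‖ := by
    intro w hw
    have h1 : ‖z‖ - ‖w‖ ≤ ‖z - w‖ := by
      simpa using norm_sub_norm_le z w
    have h2 : ‖z - w‖ ≤ r := by
      rw [norm_sub_rev, ← Complex.dist_eq]; exact hw
    linarith
  have hsub : closedBall z r ⊆ {u : ℂ | R < ‖u‖} := by
    intro w hw
    have h1 := hlow w (mem_closedBall.mp hw)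
    have h2 : R + 1 ≤ ‖z‖ / 2 := by linarith
    show R < ‖w‖
    linarith
  have hd : DiffContOnCl ℂ (err ρ) (ball z r) := by
    apply DifferentiableOn.diffContOnCl
    rw [closure_ball z hrpos.ne']
    exact (h.err_diffOn).mono hsub
  have hbound : ∀ w ∈ sphere z r, ‖err ρ w‖ ≤ 2 * C / ‖z‖ := by
    intro w hw
    have hw' : dist w z ≤ r := le_of_eq (mem_sphere.mp hw)
    have h1 := hlow w hw'
    have h2 : R + 1 ≤ ‖z‖ / 2 := by linarith
    have hRw : R < ‖w‖ := by linarith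
    have h3 := h.hρ w hRw
    calc ‖err ρ w‖ ≤ C / ‖w‖ := h3
    _ ≤ C / (‖z‖ / 2) := by
        apply div_le_div_of_nonneg_left h.hC.le (by positivity) h1
    _ = 2 * C / ‖z‖ := by field_simp
  have hfin := Complex.norm_deriv_le_of_forall_mem_sphere_norm_le hrpos hd hbound
  calc ‖deriv (err ρ) z‖ ≤ (2 * C / ‖z‖) / r := hfin
  _ = 4 * C / ‖z‖ ^ 2 := by rw [hrdef]; field_simp; ring

lemma Setup.err_pair (h : Setup ρ R C M) {s : ℝ} (hs : 8 * (R + 1) ≤ s) {a b : ℂ}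
    (ha : s ≤ ‖a‖) (hb : s ≤ ‖b‖) :
    ‖err ρ a - err ρ b‖ ≤ 64 * C / s ^ 2 * ‖a - b‖ := by
  have hR1 : (0:ℝ) < R + 1 := by linarith [h.hR]
  have hs0 : 0 < s := by linarith
  by_cases hseg : ∀ z ∈ segment ℝ b a, s / 4 ≤ ‖z‖
  · have hdiff : ∀ z ∈ segment ℝ b a, DifferentiableAt ℂ (err ρ) z := by
      intro z hz
      have h1 := hseg z hz
      have h2 : R < ‖z‖ := by linarith
      exact (h.err_diffOn).differentiableAt ((isOpen_gtR R).mem_nhds h2)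
    have hbound : ∀ z ∈ segment ℝ b a, ‖deriv (err ρ) z‖ ≤ 64 * C / s ^ 2 := by
      intro z hz
      have h1 := hseg z hz
      have h2 : 2 * (R+1) ≤ ‖z‖ := by linarith
      refine (h.deriv_err h2).trans ?_
      have hz0 : 0 < ‖z‖ := by linarith
      have hC4 : (0:ℝ) ≤ 4 * C := by nlinarith [h.hC]
      calc 4 * C / ‖z‖ ^ 2 ≤ 4 * C / (s/4) ^ 2 := by
            apply div_le_div_of_nonneg_left hC4 (by nlinarith) (by nlinarith)
      _ = 64 * C / s ^ 2 := by field_simp; ring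
    have hmvt := Convex.norm_image_sub_le_of_norm_deriv_le hdiff hbound (convex_segment b a)
      (left_mem_segment ℝ b a) (right_mem_segment ℝ b a)
    simpa using hmvt
  · push_neg at hseg
    obtain ⟨z₀, hz₀seg, hz₀⟩ := hseg
    rw [segment_eq_image'] at hz₀seg
    obtain ⟨t, ht, hteq⟩ := hz₀seg
    have h1 : ‖b - z₀‖ ≤ ‖a - b‖ := by
      rw [← hteq, show b - (b + t • (a - b)) = -(t • (a-b)) by ring, norm_neg]
      rw [show t • (a - b) = (t:ℂ) * (a - b) by simp [Complex.real_smul]]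
      rw [norm_mul]
      have : ‖(t:ℂ)‖ = |t| := by rw [Complex.norm_real, Real.norm_eq_abs]
      rw [this, _root_.abs_of_nonneg ht.1]
      nlinarith [norm_nonneg (a - b), ht.2]
    have h2 : ‖b‖ - ‖z₀‖ ≤ ‖b - z₀‖ := by
      simpa using norm_sub_norm_le b z₀
    have hab : 3 * s / 4 ≤ ‖a - b‖ := by linarith
    have hRa : R < ‖a‖ := by linarith
    have hRb : R < ‖b‖ := by linarith
    have hea : ‖err ρ a‖ ≤ C / s := by
      refine (h.hρ a hRa).trans ?_
      apply div_le_div_of_nonneg_left h.hC.le hs0 ha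
    have heb : ‖err ρ b‖ ≤ C / s := by
      refine (h.hρ b hRb).trans ?_
      apply div_le_div_of_nonneg_left h.hC.le hs0 hb
    have htri : ‖err ρ a - err ρ b‖ ≤ C / s + C / s := by
      calc ‖err ρ a - err ρ b‖ ≤
          ‖err ρ a‖ + ‖err ρ b‖ := by
            simpa using norm_sub_le (err ρ a) (err ρ b)
      _ ≤ C / s + C / s := add_le_add hea heb
    have hkey : C / s + C / s ≤ 64 * C / s ^ 2 * (3 * s / 4) := by
      have he : 64 * C / s ^ 2 * (3 * s / 4) = 48 * C / s := by field_simp; ring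
      rw [he]
      have h46 : (0:ℝ) ≤ 46 * C / s := div_nonneg (by nlinarith [h.hC]) hs0.le
      have hr : 48 * C / s - (C / s + C / s) = 46 * C / s := by ring
      linarith
    refine htri.trans (hkey.trans ?_)
    apply mul_le_mul_of_nonneg_left hab
    exact div_nonneg (by nlinarith [h.hC]) (by positivity)

end FatouAux
namespace FatouAux
variable {ρ : ℂ → ℂ} {R C M : ℝ}

/-- base point -/
noncomputable def bp (M : ℝ) : ℂ := ((2*M : ℝ) : ℂ)

/-- tail bound function -/
noncomputable def Phi (C M : ℝ) (n : ℕ) : ℝ := 2304 * C / (2*M + n - 1)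

lemma Setup.bp_mem (h : Setup ρ R C M) : bp M ∈ Om M := by
  show M < gg (bp M)
  have : gg (bp M) = 2*M := by unfold gg bp; simp
  rw [this]; linarith [h.hM0]

lemma Setup.abs_bp (h : Setup ρ R C M) : ‖bp M‖ = 2*M := by
  unfold bp; rw [Complex.norm_real, Real.norm_eq_abs, _root_.abs_of_pos (by linarith [h.hM0])]

lemma Setup.denom_pos (h : Setup ρ R C M) (n : ℕ) : (0:ℝ) < 2*M + n - 1 := by
  have := h.hM4; have : (0:ℝ) ≤ n := Nat.cast_nonneg n; linarith [h.hM4]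

lemma Setup.phi_nonneg (h : Setup ρ R C M) (n : ℕ) : 0 ≤ Phi C M n :=
  div_nonneg (by nlinarith [h.hC]) (h.denom_pos n).le

lemma Setup.phi_anti (h : Setup ρ R C M) {n m : ℕ} (hnm : n ≤ m) : Phi C M m ≤ Phi C M n := by
  unfold Phi
  apply div_le_div_of_nonneg_left (by nlinarith [h.hC]) (h.denom_pos n) ?_
  have : (n:ℝ) ≤ m := Nat.cast_le.mpr hnm
  linarith

lemma Setup.phi_zero_le (h : Setup ρ R C M) : Phi C M 0 ≤ 1/4 := by
  unfold Phi
  have h1 : M ≤ 2*M + (0:ℕ) - 1 := by have := h.hM4; push_cast; linarith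
  have h2 : 2304 * C / (2*M + (0:ℕ) - 1) ≤ 2304 * C / M := by
    apply div_le_div_of_nonneg_left (by nlinarith [h.hC]) h.hM0 h1
  have h3 : 2304 * C / M ≤ 1/4 := by
    rw [div_le_iff₀ h.hM0]
    have := h.hM3; nlinarith [h.hC]
  linarith

lemma Setup.phi_step (h : Setup ρ R C M) (n : ℕ) :
    2304 * C / (2*M + n)^2 ≤ Phi C M n - Phi C M (n+1) := by
  have h1 := h.denom_pos n
  have h2 := h.denom_pos (n+1)
  have h2' : (0:ℝ) < 2*M + n := by push_cast at h2 ⊢; linarith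
  have e1 : (2*M + (n:ℝ) - 1) ≠ 0 := ne_of_gt h1
  have e2 : (2*M + ((n:ℝ)+1) - 1) ≠ 0 := by
    have : (0:ℝ) ≤ n := Nat.cast_nonneg n
    have := h.hM4; intro hc; nlinarith [hc]
  have he : Phi C M n - Phi C M (n+1) = 2304*C/((2*M+n-1)*(2*M+n)) := by
    unfold Phi; push_cast
    rw [div_sub_div _ _ e1 e2]
    have e3 : (2*M + ((n:ℝ)+1) - 1) = 2*M + n := by ring
    rw [e3]
    congr 1
    ring
  rw [he]
  apply div_le_div_of_nonneg_left (by nlinarith [h.hC]) (by nlinarith) (by nlinarith)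

lemma Setup.phi_tendsto (h : Setup ρ R C M) : Tendsto (Phi C M) atTop (nhds 0) := by
  have h1 : Tendsto (fun n : ℕ => (n:ℝ) + (2*M - 1)) atTop atTop :=
    tendsto_atTop_add_const_right _ _ tendsto_natCast_atTop_atTop
  have h2 : Tendsto (fun n : ℕ => 2*M + (n:ℝ) - 1) atTop atTop := by
    apply h1.congr; intro n; ring
  exact Tendsto.div_atTop tendsto_const_nhds h2

lemma Setup.step_est (h : Setup ρ R C M) {u v : ℂ} (hu : u ∈ Om M) (hv : v ∈ Om M) (n : ℕ) :
    ‖err ρ (ρ^[n] u) - err ρ (ρ^[n] v)‖ ≤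
      2304 * C / (2*M + n)^2 * ‖ρ^[n] u - ρ^[n] v‖ := by
  set s : ℝ := (2*M + n)/6 with hs
  have hRs : 8 * (R + 1) ≤ s := by
    have h1 := h.hM1
    have h2 : (0:ℝ) ≤ n := Nat.cast_nonneg n
    rw [hs]; linarith
  have ha := h.orbit_abs hu n
  have hb := h.orbit_abs hv n
  have := h.err_pair hRs ha hb
  have hss : 64 * C / s^2 = 2304 * C / (2*M+n)^2 := by
    rw [hs]
    have h2' : (0:ℝ) < 2*M + n := by
      have := h.hM0; have : (0:ℝ) ≤ n := Nat.cast_nonneg n; linarith [h.hM0]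
    field_simp; ring
  rwa [hss] at this

lemma D_succ (ρ : ℂ → ℂ) (x y : ℂ) :
    ρ x - ρ y = (x - y) + (err ρ x - err ρ y) := by unfold err; ring

/-- main difference estimate, base version -/
lemma Setup.D_est0 (h : Setup ρ R C M) {u v : ℂ} (hu : u ∈ Om M) (hv : v ∈ Om M) (n : ℕ) :
    ‖(ρ^[n] u - ρ^[n] v) - (u - v)‖ ≤
      2 * ‖u - v‖ * (Phi C M 0 - Phi C M n) := by
  induction n with
  | zero =>
    simp
  | succ n ih =>
    have hDn : ‖ρ^[n] u - ρ^[n] v‖ ≤ 2 * ‖u - v‖ := by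
      have h1 : ‖ρ^[n] u - ρ^[n] v‖ ≤
          ‖(ρ^[n] u - ρ^[n] v) - (u - v)‖ + ‖u - v‖ := by
        have := norm_sub_le ((ρ^[n] u - ρ^[n] v) - (u - v)) (-(u-v))
        simpa [sub_neg_eq_add, sub_add_cancel] using
          (by
            have h := norm_add_le ((ρ^[n] u - ρ^[n] v) - (u - v)) (u - v)
            simpa [sub_add_cancel] using h)
      have h2 := h.phi_zero_le
      have h3 := h.phi_nonneg n
      nlinarith [norm_nonneg (u - v), ih]
    have hstep : ‖(ρ^[n+1] u - ρ^[n+1] v) - (ρ^[n] u - ρ^[n] v)‖ ≤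
        2 * ‖u - v‖ * (Phi C M n - Phi C M (n+1)) := by
      have h1 : ρ^[n+1] u - ρ^[n+1] v =
          (ρ^[n] u - ρ^[n] v) + (err ρ (ρ^[n] u) - err ρ (ρ^[n] v)) := by
        rw [Function.iterate_succ_apply', Function.iterate_succ_apply']
        exact D_succ ρ _ _
      rw [h1]
      rw [show (ρ^[n] u - ρ^[n] v) + (err ρ (ρ^[n] u) - err ρ (ρ^[n] v)) - (ρ^[n] u - ρ^[n] v)
        = err ρ (ρ^[n] u) - err ρ (ρ^[n] v) by ring]
      calc ‖err ρ (ρ^[n] u) - err ρ (ρ^[n] v)‖ ≤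
          2304 * C / (2*M + n)^2 * ‖ρ^[n] u - ρ^[n] v‖ := h.step_est hu hv n
      _ ≤ 2304 * C / (2*M + n)^2 * (2 * ‖u - v‖) := by
          apply mul_le_mul_of_nonneg_left hDn
          apply div_nonneg (by nlinarith [h.hC])
          have : (0:ℝ) ≤ n := Nat.cast_nonneg n
          nlinarith [h.hM0]
      _ ≤ (Phi C M n - Phi C M (n+1)) * (2 * ‖u - v‖) := by
          apply mul_le_mul_of_nonneg_right (h.phi_step n)
          nlinarith [norm_nonneg (u - v)]
      _ = 2 * ‖u - v‖ * (Phi C M n - Phi C M (n+1)) := by ring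
    calc ‖(ρ^[n+1] u - ρ^[n+1] v) - (u - v)‖ ≤
        ‖(ρ^[n+1] u - ρ^[n+1] v) - (ρ^[n] u - ρ^[n] v)‖ +
        ‖(ρ^[n] u - ρ^[n] v) - (u - v)‖ := by
          have := norm_add_le ((ρ^[n+1] u - ρ^[n+1] v) - (ρ^[n] u - ρ^[n] v))
            ((ρ^[n] u - ρ^[n] v) - (u - v))
          simpa [sub_add_sub_cancel] using this
    _ ≤ 2 * ‖u - v‖ * (Phi C M n - Phi C M (n+1)) +
        2 * ‖u - v‖ * (Phi C M 0 - Phi C M n) := add_le_add hstep ih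
    _ = 2 * ‖u - v‖ * (Phi C M 0 - Phi C M (n+1)) := by ring

lemma Setup.D_bound (h : Setup ρ R C M) {u v : ℂ} (hu : u ∈ Om M) (hv : v ∈ Om M) (n : ℕ) :
    ‖ρ^[n] u - ρ^[n] v‖ ≤ 2 * ‖u - v‖ := by
  have ih := h.D_est0 hu hv n
  have h1 : ‖ρ^[n] u - ρ^[n] v‖ ≤
      ‖(ρ^[n] u - ρ^[n] v) - (u - v)‖ + ‖u - v‖ := by
    have hh := norm_add_le ((ρ^[n] u - ρ^[n] v) - (u - v)) (u - v)
    simpa [sub_add_cancel] using hh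
  have h2 := h.phi_zero_le
  have h3 := h.phi_nonneg n
  nlinarith [norm_nonneg (u - v)]

/-- general difference estimate -/
lemma Setup.D_est (h : Setup ρ R C M) {u v : ℂ} (hu : u ∈ Om M) (hv : v ∈ Om M)
    {n m : ℕ} (hnm : n ≤ m) :
    ‖(ρ^[m] u - ρ^[m] v) - (ρ^[n] u - ρ^[n] v)‖ ≤
      2 * ‖u - v‖ * (Phi C M n - Phi C M m) := by
  induction m, hnm using Nat.le_induction with
  | base => simp
  | succ m hnm ih =>
    have hstep : ‖(ρ^[m+1] u - ρ^[m+1] v) - (ρ^[m] u - ρ^[m] v)‖ ≤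
        2 * ‖u - v‖ * (Phi C M m - Phi C M (m+1)) := by
      have h1 : ρ^[m+1] u - ρ^[m+1] v =
          (ρ^[m] u - ρ^[m] v) + (err ρ (ρ^[m] u) - err ρ (ρ^[m] v)) := by
        rw [Function.iterate_succ_apply', Function.iterate_succ_apply']
        exact D_succ ρ _ _
      rw [h1, show (ρ^[m] u - ρ^[m] v) + (err ρ (ρ^[m] u) - err ρ (ρ^[m] v)) - (ρ^[m] u - ρ^[m] v)
        = err ρ (ρ^[m] u) - err ρ (ρ^[m] v) by ring]
      calc ‖err ρ (ρ^[m] u) - err ρ (ρ^[m] v)‖ ≤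
          2304 * C / (2*M + m)^2 * ‖ρ^[m] u - ρ^[m] v‖ := h.step_est hu hv m
      _ ≤ 2304 * C / (2*M + m)^2 * (2 * ‖u - v‖) := by
          apply mul_le_mul_of_nonneg_left (h.D_bound hu hv m)
          apply div_nonneg (by nlinarith [h.hC])
          have : (0:ℝ) ≤ m := Nat.cast_nonneg m
          nlinarith [h.hM0]
      _ ≤ (Phi C M m - Phi C M (m+1)) * (2 * ‖u - v‖) := by
          apply mul_le_mul_of_nonneg_right (h.phi_step m)
          nlinarith [norm_nonneg (u - v)]
      _ = 2 * ‖u - v‖ * (Phi C M m - Phi C M (m+1)) := by ring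
    calc ‖(ρ^[m+1] u - ρ^[m+1] v) - (ρ^[n] u - ρ^[n] v)‖ ≤
        ‖(ρ^[m+1] u - ρ^[m+1] v) - (ρ^[m] u - ρ^[m] v)‖ +
        ‖(ρ^[m] u - ρ^[m] v) - (ρ^[n] u - ρ^[n] v)‖ := by
          have := norm_add_le ((ρ^[m+1] u - ρ^[m+1] v) - (ρ^[m] u - ρ^[m] v))
            ((ρ^[m] u - ρ^[m] v) - (ρ^[n] u - ρ^[n] v))
          simpa [sub_add_sub_cancel] using this
    _ ≤ 2 * ‖u - v‖ * (Phi C M m - Phi C M (m+1)) +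
        2 * ‖u - v‖ * (Phi C M n - Phi C M m) := add_le_add hstep ih
    _ = 2 * ‖u - v‖ * (Phi C M n - Phi C M (m+1)) := by ring

lemma Setup.D_cauchy (h : Setup ρ R C M) {u v : ℂ} (hu : u ∈ Om M) (hv : v ∈ Om M) :
    CauchySeq (fun n : ℕ => ρ^[n] u - ρ^[n] v) := by
  apply cauchySeq_of_le_tendsto_0 (fun N => 2 * ‖u - v‖ * Phi C M N)
  · intro n m N hn hm
    rw [Complex.dist_eq]
    rcases le_total n m with hnm | hnm
    · have h1 := h.D_est hu hv hnm
      have h2 : Phi C M n ≤ Phi C M N := h.phi_anti hn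
      have h3 := h.phi_nonneg m
      rw [show ρ^[n] u - ρ^[n] v - (ρ^[m] u - ρ^[m] v)
        = -((ρ^[m] u - ρ^[m] v) - (ρ^[n] u - ρ^[n] v)) by ring, norm_neg]
      nlinarith [norm_nonneg (u - v)]
    · have h1 := h.D_est hu hv hnm
      have h2 : Phi C M m ≤ Phi C M N := h.phi_anti hm
      have h3 := h.phi_nonneg n
      nlinarith [norm_nonneg (u - v)]
  · have := h.phi_tendsto
    have h2 : Tendsto (fun N => 2 * ‖u - v‖ * Phi C M N) atTop
        (nhds (2 * ‖u - v‖ * 0)) := this.const_mul _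
    simpa using h2

/-- the Fatou coordinate -/
noncomputable def alphaF (ρ : ℂ → ℂ) (M : ℝ) (u : ℂ) : ℂ :=
  limUnder atTop (fun n : ℕ => ρ^[n] u - ρ^[n] (bp M)) + bp M

lemma Setup.tendsto_alpha (h : Setup ρ R C M) {u : ℂ} (hu : u ∈ Om M) :
    Tendsto (fun n : ℕ => ρ^[n] u - ρ^[n] (bp M)) atTop (nhds (alphaF ρ M u - bp M)) := by
  obtain ⟨l, hl⟩ := cauchySeq_tendsto_of_complete (h.D_cauchy hu h.bp_mem)
  have : alphaF ρ M u = l + bp M := by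
    unfold alphaF; rw [hl.limUnder_eq]
  rw [this, add_sub_cancel_right]
  exact hl

lemma Setup.tendsto_D (h : Setup ρ R C M) {u v : ℂ} (hu : u ∈ Om M) (hv : v ∈ Om M) :
    Tendsto (fun n : ℕ => ρ^[n] u - ρ^[n] v) atTop (nhds (alphaF ρ M u - alphaF ρ M v)) := by
  have h1 := (h.tendsto_alpha hu).sub (h.tendsto_alpha hv)
  have h2 : (fun n : ℕ => (ρ^[n] u - ρ^[n] (bp M)) - (ρ^[n] v - ρ^[n] (bp M)))
      = fun n : ℕ => ρ^[n] u - ρ^[n] v := by funext n; ring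
  have h3 : (alphaF ρ M u - bp M) - (alphaF ρ M v - bp M) = alphaF ρ M u - alphaF ρ M v := by ring
  rw [h2, h3] at h1
  exact h1

lemma Setup.alpha_bp (h : Setup ρ R C M) : alphaF ρ M (bp M) = bp M := by
  unfold alphaF
  have : (fun n : ℕ => ρ^[n] (bp M) - ρ^[n] (bp M)) = fun _ : ℕ => (0:ℂ) := by
    funext n; ring
  rw [this, Tendsto.limUnder_eq tendsto_const_nhds, zero_add]

/-- limit version of the tail estimate -/
lemma Setup.alpha_tail (h : Setup ρ R C M) {u v : ℂ} (hu : u ∈ Om M) (hv : v ∈ Om M) (n : ℕ) :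
    ‖(alphaF ρ M u - alphaF ρ M v) - (ρ^[n] u - ρ^[n] v)‖ ≤
      2 * ‖u - v‖ * Phi C M n := by
  have h1 : Tendsto (fun m : ℕ => ‖(ρ^[m] u - ρ^[m] v) - (ρ^[n] u - ρ^[n] v)‖)
      atTop (nhds (‖(alphaF ρ M u - alphaF ρ M v) - (ρ^[n] u - ρ^[n] v)‖)) := by
    apply continuous_norm.continuousAt.tendsto.comp
    exact (h.tendsto_D hu hv).sub tendsto_const_nhds
  apply le_of_tendsto h1
  filter_upwards [eventually_ge_atTop n] with m hm
  have h2 := h.D_est hu hv hm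
  have h3 := h.phi_nonneg m
  nlinarith [norm_nonneg (u - v)]

lemma Setup.alpha_diff_est (h : Setup ρ R C M) {u v : ℂ} (hu : u ∈ Om M) (hv : v ∈ Om M) :
    ‖(alphaF ρ M u - alphaF ρ M v) - (u - v)‖ ≤ ‖u - v‖ / 2 := by
  have h1 := h.alpha_tail hu hv 0
  simp only [Function.iterate_zero_apply] at h1
  have h2 := h.phi_zero_le
  have h3 := h.phi_nonneg 0
  nlinarith [norm_nonneg (u - v)]

lemma Setup.alpha_inj (h : Setup ρ R C M) : Set.InjOn (alphaF ρ M) (Om M) := by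
  intro u hu v hv huv
  have h1 := h.alpha_diff_est hu hv
  rw [huv] at h1
  simp only [sub_self, zero_sub, norm_neg] at h1
  have h2 : ‖u - v‖ = 0 := by linarith [norm_nonneg (u - v)]
  have h3 := norm_eq_zero.mp h2
  exact sub_eq_zero.mp h3
  
lemma Setup.alpha_step (h : Setup ρ R C M) {u : ℂ} (hu : u ∈ Om M) :
    alphaF ρ M (ρ u) = alphaF ρ M u + 1 := by
  have h1 := h.tendsto_D (h.om_step hu) hu
  have h2 : (fun n : ℕ => ρ^[n] (ρ u) - ρ^[n] u) = fun n : ℕ => 1 + err ρ (ρ^[n] u) := by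
    funext n
    rw [← Function.iterate_succ_apply, Function.iterate_succ_apply']
    unfold err; ring
  rw [h2] at h1
  have h3 : Tendsto (fun n : ℕ => err ρ (ρ^[n] u)) atTop (nhds 0) := by
    apply squeeze_zero_norm (a := fun n : ℕ => 6 * C / (2*M + n))
    · intro n
      have ha := h.orbit_abs hu n
      have hmem := (h.orbit hu n).1
      have hd : (0:ℝ) < (2*M + n)/6 := by
        have : (0:ℝ) ≤ n := Nat.cast_nonneg n
        linarith [h.hM0]
      calc ‖err ρ (ρ^[n] u)‖ ≤ C / ‖ρ^[n] u‖ :=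
            h.hρ _ (h.om_subset hmem)
      _ ≤ C / ((2*M + n)/6) := div_le_div_of_nonneg_left h.hC.le hd ha
      _ = 6 * C / (2*M + n) := by field_simp
    · have h4 : Tendsto (fun n : ℕ => 2*M + (n:ℝ)) atTop atTop := by
        apply (tendsto_atTop_add_const_right _ (2*M) tendsto_natCast_atTop_atTop).congr
        intro n; ring
      exact Tendsto.div_atTop tendsto_const_nhds h4
  have h5 : Tendsto (fun n : ℕ => 1 + err ρ (ρ^[n] u)) atTop (nhds 1) := by
    have := (tendsto_const_nhds (x := (1:ℂ)) (f := atTop (α := ℕ))).add h3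
    simpa using this
  have h6 := tendsto_nhds_unique h1 h5
  have : alphaF ρ M (ρ u) - alphaF ρ M u = 1 := h6
  linear_combination this

end FatouAux
namespace FatouAux
variable {ρ : ℂ → ℂ} {R C M : ℝ}

lemma log_gap {x : ℝ} (hx : 0 < x) : 1/(x+1) ≤ Real.log (x+1) - Real.log x := by
  have h1 : Real.log (x/(x+1)) ≤ x/(x+1) - 1 := Real.log_le_sub_one_of_pos (by positivity)
  rw [Real.log_div (ne_of_gt hx) (by positivity)] at h1
  have h2 : x/(x+1) - 1 = -(1/(x+1)) := by field_simp; ring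
  linarith

lemma Setup.harm (h : Setup ρ R C M) (N : ℕ) :
    ∑ k ∈ Finset.range N, 1/(2*M + (k:ℝ)) ≤ Real.log (2*M + N - 1) - Real.log (2*M - 1) := by
  induction N with
  | zero => push_cast; simp
  | succ N ih =>
    rw [Finset.sum_range_succ]
    have hx : (0:ℝ) < 2*M + N - 1 := h.denom_pos N
    have hgap := log_gap hx
    have e1 : 2*M + (N:ℝ) - 1 + 1 = 2*M + N := by ring
    rw [e1] at hgap
    push_cast
    have e3 : 2*M + ((N:ℝ)+1) - 1 = 2*M + N := by ring
    rw [e3]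
    linarith

lemma Setup.err_orbit_le (h : Setup ρ R C M) {u : ℂ} (hu : u ∈ Om M) (n : ℕ) :
    ‖err ρ (ρ^[n] u)‖ ≤ 6 * C / (2*M + n) := by
  have ha := h.orbit_abs hu n
  have hmem := (h.orbit hu n).1
  have hd : (0:ℝ) < (2*M + n)/6 := by
    have : (0:ℝ) ≤ n := Nat.cast_nonneg n
    linarith [h.hM0]
  calc ‖err ρ (ρ^[n] u)‖ ≤ C / ‖ρ^[n] u‖ :=
        h.hρ _ (h.om_subset hmem)
  _ ≤ C / ((2*M + n)/6) := div_le_div_of_nonneg_left h.hC.le hd ha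
  _ = 6 * C / (2*M + n) := by field_simp

lemma Setup.Dsum (h : Setup ρ R C M) {v : ℂ} (hv : v ∈ Om M) (N : ℕ) :
    ‖(ρ^[N] v - ρ^[N] (bp M)) - (v - bp M)‖ ≤
      ∑ k ∈ Finset.range N, 12*C/(2*M + (k:ℝ)) := by
  induction N with
  | zero => simp
  | succ N ih =>
    rw [Finset.sum_range_succ]
    have h1 : ρ^[N+1] v - ρ^[N+1] (bp M) =
        (ρ^[N] v - ρ^[N] (bp M)) + (err ρ (ρ^[N] v) - err ρ (ρ^[N] (bp M))) := by
      rw [Function.iterate_succ_apply', Function.iterate_succ_apply']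
      exact D_succ ρ _ _
    have h2 : ‖err ρ (ρ^[N] v) - err ρ (ρ^[N] (bp M))‖ ≤ 12*C/(2*M + (N:ℝ)) := by
      calc ‖err ρ (ρ^[N] v) - err ρ (ρ^[N] (bp M))‖ ≤
          ‖err ρ (ρ^[N] v)‖ + ‖err ρ (ρ^[N] (bp M))‖ := by
            have := norm_add_le (err ρ (ρ^[N] v)) (-(err ρ (ρ^[N] (bp M))))
            simpa [sub_eq_add_neg] using this
      _ ≤ 6*C/(2*M + (N:ℝ)) + 6*C/(2*M + (N:ℝ)) :=
          add_le_add (h.err_orbit_le hv N) (h.err_orbit_le h.bp_mem N)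
      _ = 12*C/(2*M + (N:ℝ)) := by ring
    calc ‖(ρ^[N+1] v - ρ^[N+1] (bp M)) - (v - bp M)‖ ≤
        ‖(ρ^[N] v - ρ^[N] (bp M)) - (v - bp M)‖ +
        ‖err ρ (ρ^[N] v) - err ρ (ρ^[N] (bp M))‖ := by
          rw [h1]
          have := norm_add_le ((ρ^[N] v - ρ^[N] (bp M)) - (v - bp M))
            (err ρ (ρ^[N] v) - err ρ (ρ^[N] (bp M)))
          rw [show (ρ^[N] v - ρ^[N] (bp M)) + (err ρ (ρ^[N] v) - err ρ (ρ^[N] (bp M))) - (v - bp M)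
            = ((ρ^[N] v - ρ^[N] (bp M)) - (v - bp M)) + (err ρ (ρ^[N] v) - err ρ (ρ^[N] (bp M)))
            by ring]
          exact this
    _ ≤ (∑ k ∈ Finset.range N, 12*C/(2*M + (k:ℝ))) + 12*C/(2*M + (N:ℝ)) := add_le_add ih h2

lemma Setup.alpha_growth (h : Setup ρ R C M) {v : ℂ} (hv : v ∈ Om M) :
    ‖alphaF ρ M v - v‖ ≤
      9216*C + 12*C*Real.log (2*M+1) + 12*C*Real.log (1 + ‖v‖) := by
  set N := ⌈‖v‖⌉₊ with hNdef
  have hN1 : ‖v‖ ≤ (N:ℝ) := Nat.le_ceil _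
  have hN2 : (N:ℝ) < ‖v‖ + 1 := Nat.ceil_lt_add_one (norm_nonneg v)
  have hv0 : (0:ℝ) ≤ ‖v‖ := norm_nonneg v
  have hM4 := h.hM4
  have hC := h.hC
  -- tail estimate
  have htail := h.alpha_tail hv h.bp_mem N
  rw [h.alpha_bp] at htail
  have hD0 : ‖v - bp M‖ ≤ ‖v‖ + 2*M := by
    have := norm_add_le v (-(bp M))
    simpa [sub_eq_add_neg, h.abs_bp] using this
  have htail2 : 2 * ‖v - bp M‖ * Phi C M N ≤ 9216*C := by
    have hP : (0:ℝ) < M + ‖v‖ := by linarith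
    have hPhi : Phi C M N ≤ 2304*C/(M + ‖v‖) := by
      unfold Phi
      apply div_le_div_of_nonneg_left (by nlinarith) (by positivity) (by linarith)
    have h1 : 2 * ‖v - bp M‖ * Phi C M N ≤
        2 * (‖v‖ + 2*M) * (2304*C/(M + ‖v‖)) := by
      apply mul_le_mul (by linarith) hPhi (h.phi_nonneg N) (by linarith)
    refine h1.trans ?_
    rw [mul_div_assoc', div_le_iff₀ hP]
    nlinarith
  -- harmonic sum estimate
  have hsum := h.Dsum hv N
  have hsum2 : (∑ k ∈ Finset.range N, 12*C/(2*M + (k:ℝ))) ≤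
      12*C*(Real.log (2*M + N - 1) - Real.log (2*M - 1)) := by
    have he : (∑ k ∈ Finset.range N, 12*C/(2*M + (k:ℝ)))
        = 12*C * ∑ k ∈ Finset.range N, 1/(2*M + (k:ℝ)) := by
      rw [Finset.mul_sum]
      apply Finset.sum_congr rfl
      intro k _
      rw [mul_one_div]
    rw [he]
    apply mul_le_mul_of_nonneg_left (h.harm N) (by nlinarith)
  have hlogdrop : (0:ℝ) ≤ Real.log (2*M - 1) := Real.log_nonneg (by linarith)
  have hlog : Real.log (2*M + N - 1) ≤ Real.log (2*M+1) + Real.log (1 + ‖v‖) := by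
    have hx : 2*M + (N:ℝ) - 1 ≤ (2*M+1)*(1 + ‖v‖) := by nlinarith
    have hpos : (0:ℝ) < 2*M + N - 1 := h.denom_pos N
    calc Real.log (2*M + N - 1) ≤ Real.log ((2*M+1)*(1 + ‖v‖)) :=
          Real.log_le_log hpos hx
    _ = Real.log (2*M+1) + Real.log (1 + ‖v‖) := by
        rw [Real.log_mul (by linarith) (by linarith)]
  -- assemble
  have hid : alphaF ρ M v - v =
      ((alphaF ρ M v - bp M) - (ρ^[N] v - ρ^[N] (bp M))) +
      ((ρ^[N] v - ρ^[N] (bp M)) - (v - bp M)) := by ring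
  calc ‖alphaF ρ M v - v‖ ≤
      ‖(alphaF ρ M v - bp M) - (ρ^[N] v - ρ^[N] (bp M))‖ +
      ‖(ρ^[N] v - ρ^[N] (bp M)) - (v - bp M)‖ := by
        rw [hid]; exact norm_add_le _ _
  _ ≤ 2 * ‖v - bp M‖ * Phi C M N +
      (∑ k ∈ Finset.range N, 12*C/(2*M + (k:ℝ))) := add_le_add htail hsum
  _ ≤ 9216*C + 12*C*(Real.log (2*M + N - 1) - Real.log (2*M - 1)) := add_le_add htail2 hsum2
  _ ≤ 9216*C + 12*C*Real.log (2*M+1) + 12*C*Real.log (1 + ‖v‖) := by nlinarith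

lemma isOpen_Om (M : ℝ) : IsOpen (Om M) := by
  have h2 : Continuous (fun u : ℂ => u.re + 2*|u.im|) := by continuity
  exact isOpen_lt continuous_const h2

lemma Setup.iter_diffOn (h : Setup ρ R C M) (n : ℕ) : DifferentiableOn ℂ (ρ^[n]) (Om M) := by
  induction n with
  | zero => rw [Function.iterate_zero]; exact differentiableOn_id
  | succ n ih =>
    rw [Function.iterate_succ']
    exact DifferentiableOn.comp h.hhol ih (fun u hu => h.om_subset ((h.orbit hu n).1))

lemma Setup.alpha_diffOn (h : Setup ρ R C M) : DifferentiableOn ℂ (alphaF ρ M) (Om M) := by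
  have hTLU : TendstoLocallyUniformlyOn
      (fun (n : ℕ) (u : ℂ) => ρ^[n] u - ρ^[n] (bp M) + bp M) (alphaF ρ M) atTop (Om M) := by
    rw [tendstoLocallyUniformlyOn_iff]
    intro ε hε x hx
    refine ⟨Om M ∩ ball x 1,
      Filter.inter_mem self_mem_nhdsWithin
        (mem_nhdsWithin_of_mem_nhds (ball_mem_nhds x one_pos)), ?_⟩
    have htends : Tendsto (fun n : ℕ => 2*(‖x - bp M‖ + 1) * Phi C M n)
        atTop (nhds 0) := by
      have := (h.phi_tendsto).const_mul (2*(‖x - bp M‖ + 1))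
      simpa using this
    filter_upwards [htends.eventually_lt_const hε] with n hn
    rintro y ⟨hyOm, hyball⟩
    rw [Complex.dist_eq]
    have he : alphaF ρ M y - (ρ^[n] y - ρ^[n] (bp M) + bp M)
        = (alphaF ρ M y - alphaF ρ M (bp M)) - (ρ^[n] y - ρ^[n] (bp M)) := by
      rw [h.alpha_bp]; ring
    rw [he]
    have h1 := h.alpha_tail hyOm h.bp_mem n
    have h2 : ‖y - bp M‖ ≤ ‖x - bp M‖ + 1 := by
      have h3 : ‖y - x‖ < 1 := by
        rw [← Complex.dist_eq]; exact mem_ball.mp hyball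
      have h4 : ‖y - bp M‖ ≤ ‖y - x‖ + ‖x - bp M‖ := by
        have := norm_add_le (y - x) (x - bp M)
        simpa [sub_add_sub_cancel] using this
      linarith
    have h5 : 2 * ‖y - bp M‖ * Phi C M n ≤
        2*(‖x - bp M‖ + 1) * Phi C M n := by
      apply mul_le_mul_of_nonneg_right (by linarith) (h.phi_nonneg n)
    calc ‖(alphaF ρ M y - alphaF ρ M (bp M)) - (ρ^[n] y - ρ^[n] (bp M))‖
        ≤ 2 * ‖y - bp M‖ * Phi C M n := h1
    _ ≤ 2*(‖x - bp M‖ + 1) * Phi C M n := h5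
    _ < ε := hn
  exact hTLU.differentiableOn (Filter.Eventually.of_forall (fun n =>
    ((h.iter_diffOn n).sub (differentiableOn_const _)).add (differentiableOn_const _)))
    (isOpen_Om M)

end FatouAux
namespace FatouAux
variable {ρ : ℂ → ℂ} {R C M : ℝ}

lemma loglin {y D : ℝ} (hy : 0 < y) (hD : 0 < D) : Real.log y ≤ y / D + Real.log D := by
  have h1 : Real.log (y/D) ≤ y/D - 1 := Real.log_le_sub_one_of_pos (by positivity)
  rw [Real.log_div (ne_of_gt hy) (ne_of_gt hD)] at h1
  linarith

lemma Setup.exists_preimage (h : Setup ρ R C M) {w : ℂ}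
    (hb : ∀ v ∈ closedBall w (‖w‖ / 10), v ∈ Om M)
    (hc : ∀ v ∈ closedBall w (‖w‖ / 10),
      ‖v - alphaF ρ M v‖ ≤ ‖w‖ / 10) :
    ∃ v ∈ closedBall w (‖w‖ / 10), v ∈ Om M ∧ alphaF ρ M v = w := by
  set r := ‖w‖ / 10 with hr
  have hr0 : 0 ≤ r := by positivity
  set T := fun v : ℂ => v - alphaF ρ M v + w with hT
  have hmaps : MapsTo T (closedBall w r) (closedBall w r) := by
    intro v hv
    rw [mem_closedBall, Complex.dist_eq]
    have : T v - w = v - alphaF ρ M v := by rw [hT]; ring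
    rw [this]
    exact hc v hv
  have hlip : LipschitzOnWith (1/2 : NNReal) T (closedBall w r) := by
    rw [lipschitzOnWith_iff_dist_le_mul]
    intro x hx y hy
    rw [Complex.dist_eq, Complex.dist_eq]
    have hxOm := hb x hx
    have hyOm := hb y hy
    have h1 := h.alpha_diff_est hxOm hyOm
    have h2 : T x - T y = -((alphaF ρ M x - alphaF ρ M y) - (x - y)) := by rw [hT]; ring
    rw [h2, norm_neg]
    have h3 : ((1/2 : NNReal) : ℝ) = 1/2 := by norm_num
    rw [h3]
    linarith
  have hcontr : ContractingWith (1/2 : NNReal) (hmaps.restrict T _ _) :=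
    ⟨by rw [← NNReal.coe_lt_coe]; norm_num, hlip.to_restrict⟩
  have hwmem : w ∈ closedBall w r := mem_closedBall_self hr0
  obtain ⟨y, hy_mem, hy_fix, -, -⟩ :=
    hcontr.exists_fixedPoint' (Metric.isClosed_closedBall.isComplete) hmaps hwmem (edist_ne_top _ _)
  refine ⟨y, hy_mem, hb y hy_mem, ?_⟩
  have hfix : T y = y := hy_fix
  rw [hT] at hfix
  simp only at hfix
  linear_combination -hfix

end FatouAux

open FatouAux Filter Metric Set

theorem fatou_linearization_at_infinity' (R : ℝ) (hR : 1 < R) (ρ : ℂ → ℂ)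
    (hρhol : DifferentiableOn ℂ ρ {u : ℂ | R < ‖u‖})
    (C : ℝ) (hC : 0 < C)
    (hρ : ∀ u : ℂ, R < ‖u‖ →
      ‖ρ u - u - 1‖ ≤ C / ‖u‖) :
    ∃ R' ≥ R, ∃ ψ : ℂ → ℂ,
      DifferentiableOn ℂ ψ (fatouSector R') ∧
      Set.InjOn ψ (fatouSector R') ∧
      (∃ C' > (0 : ℝ), ∀ u ∈ fatouSector R',
        ‖ψ u - u‖ ≤ C' * (1 + ‖Complex.log u‖)) ∧
      ∀ u ∈ fatouSector R', u + 1 ∈ fatouSector R' → ρ (ψ u) = ψ (u + 1) := by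
  obtain ⟨M, hMdef⟩ : ∃ M : ℝ, M = 24*(R+1) + 18*C + 9216*C + 1 := ⟨_, rfl⟩
  have hset : Setup ρ R C M := by
    refine ⟨hR, hC, hρhol, hρ, ?_, ?_, ?_, ?_⟩ <;> rw [hMdef] <;> nlinarith
  obtain ⟨B2, hB2def⟩ : ∃ x : ℝ, x = 12*C := ⟨_, rfl⟩
  obtain ⟨A2, hA2def⟩ : ∃ x : ℝ, x = 9216*C + B2*Real.log (2*M+1) := ⟨_, rfl⟩
  have hM1 : 1 ≤ M := hset.hM4
  have hlogM : 0 < Real.log (2*M+1) := Real.log_pos (by linarith)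
  have hB2 : 0 < B2 := by rw [hB2def]; nlinarith
  have hA2 : 0 < A2 := by rw [hA2def]; nlinarith
  obtain ⟨D, hDdef⟩ : ∃ x : ℝ, x = 40*B2 + 2 := ⟨_, rfl⟩
  have hD1 : 1 ≤ D := by rw [hDdef]; nlinarith
  have hlogD : 0 ≤ Real.log D := Real.log_nonneg hD1
  obtain ⟨K0, hK0def⟩ : ∃ x : ℝ, x = A2 + B2*Real.log D := ⟨_, rfl⟩
  have hK0 : 0 < K0 := by rw [hK0def]; nlinarith
  obtain ⟨R', hR'def⟩ : ∃ x : ℝ, x = R + 10*M + 40*(K0 + 1) := ⟨_, rfl⟩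
  have hRR' : R ≤ R' := by rw [hR'def]; nlinarith
  have hR'1 : 1 < R' := by rw [hR'def]; nlinarith
  have hR'M : 10*M ≤ R' := by rw [hR'def]; nlinarith
  have hR'K : 40*(K0+1) ≤ R' := by rw [hR'def]; nlinarith
  -- facts about sector points
  have hsec : ∀ w ∈ fatouSector R', R' < ‖w‖ ∧ ‖w‖ / 2 < gg w := by
    intro w hw
    exact ⟨hw.1, sector_gauge (by linarith) hw⟩
  have hball_Om : ∀ w ∈ fatouSector R', ∀ v ∈ closedBall w (‖w‖ / 10), v ∈ Om M := by
    intro w hw v hv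
    obtain ⟨hw1, hw2⟩ := hsec w hw
    rw [mem_closedBall, Complex.dist_eq] at hv
    have h1 : gg w - gg v ≤ 3 * ‖w - v‖ := gg_lipschitz w v
    have h2 : ‖w - v‖ ≤ ‖w‖ / 10 := by
      rw [norm_sub_rev]; exact hv
    show M < gg v
    have : R' / 5 ≤ ‖w‖ / 5 := by linarith
    linarith
  have hball_contr : ∀ w ∈ fatouSector R', ∀ v ∈ closedBall w (‖w‖ / 10),
      ‖v - alphaF ρ M v‖ ≤ ‖w‖ / 10 := by
    intro w hw v hv
    obtain ⟨hw1, hw2⟩ := hsec w hw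
    have hvOm := hball_Om w hw v hv
    rw [mem_closedBall, Complex.dist_eq] at hv
    have hvabs : ‖v‖ ≤ 2 * ‖w‖ := by
      have := norm_add_le (v - w) w
      simp only [sub_add_cancel] at this
      linarith
    have hgrow := hset.alpha_growth hvOm
    rw [show v - alphaF ρ M v = -(alphaF ρ M v - v) by ring, norm_neg]
    have hlog1 : Real.log (1 + ‖v‖) ≤ Real.log (1 + 2*‖w‖) :=
      Real.log_le_log (by positivity) (by linarith)
    have hlog2 : Real.log (1 + 2*‖w‖) ≤ (1 + 2*‖w‖)/D + Real.log D :=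
      loglin (by positivity) (by linarith)
    have hgB : B2 * ((1 + 2*‖w‖)/D) ≤ (1 + 2*‖w‖)/40 := by
      rw [show B2 * ((1 + 2*‖w‖)/D) = (B2*(1 + 2*‖w‖))/D by ring,
        div_le_div_iff₀ (by linarith) (by norm_num)]
      have h40 : 40 * B2 ≤ D := by rw [hDdef]; linarith
      nlinarith [norm_nonneg w]
    have hchain : ‖alphaF ρ M v - v‖ ≤
        A2 + B2 * Real.log D + (1 + 2*‖w‖)/40 := by
      have h3 : B2 * Real.log (1 + ‖v‖) ≤
          B2 * Real.log (1 + 2*‖w‖) :=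
        mul_le_mul_of_nonneg_left hlog1 hB2.le
      have h4 : B2 * Real.log (1 + 2*‖w‖) ≤
          B2 * ((1 + 2*‖w‖)/D) + B2 * Real.log D := by
        have hh := mul_le_mul_of_nonneg_left hlog2 hB2.le
        have he : B2 * ((1 + 2*‖w‖)/D + Real.log D)
            = B2 * ((1 + 2*‖w‖)/D) + B2 * Real.log D := by ring
        linarith
      have h5 := hgrow
      rw [show 9216*C + 12*C*Real.log (2*M+1) + 12*C*Real.log (1 + ‖v‖)
        = A2 + B2*Real.log (1 + ‖v‖) by rw [hA2def, hB2def]] at h5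
      linarith
    have hfin : A2 + B2 * Real.log D + (1 + 2*‖w‖)/40 ≤ ‖w‖ / 10 := by
      have h6 : 40*(K0+1) < ‖w‖ := by linarith
      linarith [hK0def]
    linarith
  -- ψ definition
  classical
  obtain ⟨ψ, hψspec⟩ : ∃ ψ : ℂ → ℂ, ∀ w : ℂ, (∃ v, v ∈ Om M ∧ alphaF ρ M v = w) →
      ψ w ∈ Om M ∧ alphaF ρ M (ψ w) = w :=
    ⟨fun w => if hex : ∃ v, v ∈ Om M ∧ alphaF ρ M v = w then hex.choose else w,
     fun w hex => by simp only [dif_pos hex]; exact hex.choose_spec⟩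
  have hψex : ∀ w ∈ fatouSector R', ∃ v, v ∈ Om M ∧ alphaF ρ M v = w := by
    intro w hw
    obtain ⟨v, -, hvOm, hva⟩ :=
      hset.exists_preimage (hball_Om w hw) (hball_contr w hw)
    exact ⟨v, hvOm, hva⟩
  have hψmem : ∀ w ∈ fatouSector R', ψ w ∈ Om M := fun w hw => (hψspec w (hψex w hw)).1
  have hψα : ∀ w ∈ fatouSector R', alphaF ρ M (ψ w) = w := fun w hw =>
    (hψspec w (hψex w hw)).2
  have hψball : ∀ w ∈ fatouSector R', ‖ψ w - w‖ ≤ ‖w‖ / 10 := by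
    intro w hw
    obtain ⟨v, hvball, hvOm, hva⟩ :=
      hset.exists_preimage (hball_Om w hw) (hball_contr w hw)
    have : ψ w = v := hset.alpha_inj (hψmem w hw) hvOm ((hψα w hw).trans hva.symm)
    rw [this, ← Complex.dist_eq]
    exact hvball
  refine ⟨R', hRR', ψ, ?_, ?_, ?_, ?_⟩
  · -- differentiability
    intro w₀ hw₀
    apply DifferentiableAt.differentiableWithinAt
    have hv₀ : ψ w₀ ∈ Om M := hψmem w₀ hw₀
    have hα0 : alphaF ρ M (ψ w₀) = w₀ := hψα w₀ hw₀
    obtain ⟨p, hp⟩ := (hset.alpha_diffOn).analyticAt ((isOpen_Om M).mem_nhds hv₀)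
    have hstrict := hp.hasStrictDerivAt
    set d : ℂ := p 1 (fun _ => 1) with hddef
    have hd : d ≠ 0 := by
      have hder := hstrict.hasDerivAt
      rw [hasDerivAt_iff_tendsto_slope] at hder
      have hOmnhds : ∀ᶠ v in nhdsWithin (ψ w₀) {(ψ w₀)}ᶜ, v ∈ Om M :=
        eventually_nhdsWithin_of_eventually_nhds
          ((isOpen_Om M).eventually_mem hv₀)
      have hbound : ∀ᶠ v in nhdsWithin (ψ w₀) {(ψ w₀)}ᶜ,
          ‖slope (alphaF ρ M) (ψ w₀) v - 1‖ ≤ 1/2 := by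
        filter_upwards [hOmnhds, self_mem_nhdsWithin] with v hvOm hvne
        have hne : v - ψ w₀ ≠ 0 := sub_ne_zero.mpr hvne
        rw [slope_def_field]
        have h1 := hset.alpha_diff_est hvOm hv₀
        have h2 : (alphaF ρ M v - alphaF ρ M (ψ w₀)) / (v - ψ w₀) - 1
            = ((alphaF ρ M v - alphaF ρ M (ψ w₀)) - (v - ψ w₀)) / (v - ψ w₀) := by
          field_simp
        rw [h2, norm_div]
        rw [div_le_iff₀ (by simpa using norm_pos_iff.mpr hne)]
        calc ‖alphaF ρ M v - alphaF ρ M (ψ w₀) - (v - ψ w₀)‖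
            ≤ ‖v - ψ w₀‖ / 2 := h1
        _ = 1/2 * ‖v - ψ w₀‖ := by ring
      have htend : Tendsto (fun v => ‖slope (alphaF ρ M) (ψ w₀) v - 1‖)
          (nhdsWithin (ψ w₀) {(ψ w₀)}ᶜ) (nhds ‖d - 1‖) :=
        (hder.sub tendsto_const_nhds).norm
      have hle : ‖d - 1‖ ≤ 1/2 := le_of_tendsto htend hbound
      intro h0
      rw [h0] at hle
      simp only [zero_sub, norm_neg, norm_one] at hle
      norm_num at hle
    have hFD := hstrict.hasStrictFDerivAt_equiv hd
    have hg_right := hFD.eventually_right_inverse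
    have hg_cont := hFD.localInverse_continuousAt
    have hg_at := hFD.localInverse_apply_image
    have hg_strict := hFD.to_localInverse
    set g := hFD.localInverse (alphaF ρ M) _ _ with hgdef
    have hg_mem : ∀ᶠ y in nhds (alphaF ρ M (ψ w₀)), g y ∈ Om M := by
      apply hg_cont.eventually_mem
      rw [hg_at]
      exact (isOpen_Om M).mem_nhds hv₀
    have hev : ψ =ᶠ[nhds w₀] g := by
      rw [← hα0]
      filter_upwards [hg_right, hg_mem] with y h1 h2
      have hex : ∃ v, v ∈ Om M ∧ alphaF ρ M v = y := ⟨g y, h2, h1⟩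
      obtain ⟨hmem', heq'⟩ := hψspec y hex
      exact hset.alpha_inj hmem' h2 (heq'.trans h1.symm)
    rw [hev.differentiableAt_iff]
    have := hg_strict.differentiableAt
    rwa [hα0] at this
  · -- injectivity
    intro w hw w' hw' heq
    have h1 := hψα w hw
    have h2 := hψα w' hw'
    rw [← h1, ← h2, heq]
  · -- growth
    refine ⟨A2 + 2*B2, add_pos hA2 (mul_pos two_pos hB2), ?_⟩
    intro w hw
    obtain ⟨hw1, hw2⟩ := hsec w hw
    have hvOm := hψmem w hw
    have hgrow := hset.alpha_growth hvOm
    rw [hψα w hw, ← hB2def] at hgrow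
    have hwabs1 : (1:ℝ) ≤ ‖w‖ := by linarith
    have hvabs : ‖ψ w‖ ≤ 2 * ‖w‖ := by
      have h3 := hψball w hw
      have := norm_add_le (ψ w - w) w
      simp only [sub_add_cancel] at this
      linarith
    have hlogw : Real.log (‖w‖) = (Complex.log w).re := (Complex.log_re w).symm
    have hlogw0 : 0 ≤ Real.log (‖w‖) := Real.log_nonneg hwabs1
    have hlogle : Real.log (‖w‖) ≤ ‖Complex.log w‖ := by
      rw [hlogw]
      exact (le_abs_self _).trans (Complex.abs_re_le_norm _)
    have hlog3 : Real.log (1 + ‖ψ w‖) ≤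
        Real.log 3 + Real.log (‖w‖) := by
      have h4 : 1 + ‖ψ w‖ ≤ 3 * ‖w‖ := by linarith
      calc Real.log (1 + ‖ψ w‖) ≤ Real.log (3 * ‖w‖) :=
            Real.log_le_log (by positivity) h4
      _ = Real.log 3 + Real.log (‖w‖) := by
          rw [Real.log_mul (by norm_num) (by linarith)]
    have hlog3le : Real.log 3 ≤ 2 := by
      have := Real.log_le_sub_one_of_pos (by norm_num : (0:ℝ) < 3)
      linarith
    rw [show ψ w - w = -(w - ψ w) by ring, norm_neg]
    have hB2log : B2*Real.log (1 + ‖ψ w‖) ≤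
        B2 * (Real.log 3 + Real.log (‖w‖)) :=
      mul_le_mul_of_nonneg_left hlog3 hB2.le
    calc ‖w - ψ w‖
        ≤ 9216*C + B2*Real.log (2*M+1) + B2*Real.log (1 + ‖ψ w‖) := hgrow
    _ ≤ A2 + B2 * (Real.log 3 + Real.log (‖w‖)) := by
        rw [hA2def]; linarith
    _ ≤ (A2 + 2*B2) * (1 + ‖Complex.log w‖) := by
        have h6 : 0 ≤ ‖Complex.log w‖ := norm_nonneg _
        have t1 : B2 * Real.log 3 ≤ B2 * 2 := mul_le_mul_of_nonneg_left hlog3le hB2.le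
        have t2 : B2 * Real.log (‖w‖) ≤ B2 * ‖Complex.log w‖ :=
          mul_le_mul_of_nonneg_left hlogle hB2.le
        have t3 : B2 * ‖Complex.log w‖ ≤ (A2 + 2*B2) * ‖Complex.log w‖ :=
          mul_le_mul_of_nonneg_right (by linarith only [hA2, hB2]) h6
        have expand : (A2 + 2*B2) * (1 + ‖Complex.log w‖)
            = A2 + 2*B2 + (A2 + 2*B2) * ‖Complex.log w‖ := by ring
        have expand2 : B2 * (Real.log 3 + Real.log (‖w‖))
            = B2 * Real.log 3 + B2 * Real.log (‖w‖) := by ring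
        linarith only [t1, t2, t3, expand, expand2, hA2]
  · -- functional equation
    intro w hw hw1
    have hvOm := hψmem w hw
    have hρv : ρ (ψ w) ∈ Om M := hset.om_step hvOm
    have hstep := hset.alpha_step hvOm
    rw [hψα w hw] at hstep
    have h1 : alphaF ρ M (ψ (w+1)) = w + 1 := hψα (w+1) hw1
    exact hset.alpha_inj hρv (hψmem (w+1) hw1) (hstep.trans h1.symm)

/-- One-dimensional Fatou linearization at infinity: if
`ρ(u) = u + 1 + O(1/u)` is holomorphic for `|u| > R`, there is a holomorphic
injective `ψ` on a sector `S_{R'}`, of the form `ψ(u) = u + O(log u)`, with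
`ψ⁻¹ ∘ ρ ∘ ψ (u) = u + 1`, i.e. `ρ(ψ(u)) = ψ(u+1)` on `S_{R'}`. -/
theorem fatou_linearization_at_infinity (R : ℝ) (hR : 1 < R) (ρ : ℂ → ℂ)
    (hρhol : DifferentiableOn ℂ ρ {u : ℂ | R < ‖u‖})
    (C : ℝ) (hC : 0 < C)
    (hρ : ∀ u : ℂ, R < ‖u‖ →
      ‖ρ u - u - 1‖ ≤ C / ‖u‖) :
    ∃ R' ≥ R, ∃ ψ : ℂ → ℂ,
      DifferentiableOn ℂ ψ (fatouSector R') ∧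
      Set.InjOn ψ (fatouSector R') ∧
      (∃ C' > (0 : ℝ), ∀ u ∈ fatouSector R',
        ‖ψ u - u‖ ≤ C' * (1 + ‖Complex.log u‖)) ∧
      ∀ u ∈ fatouSector R', u + 1 ∈ fatouSector R' → ρ (ψ u) = ψ (u + 1) := by
  exact fatou_linearization_at_infinity' R hR ρ hρhol C hC hρ
end
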